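/- arXiv:2008.00389 — 6 statements merged into one kernel-verified Lean document; each statement's English description precedes it below -/
import Mathlib

section
/- For a non-zero polynomial f ∈ ℂ[X] of degree d with leading coefficient a_d and roots α_1,…,α_d, the Mahler measure M(f) = |a_d| ∏_{i=1}^d max(|α_i|,1) satisfies 2^{-d} H(f) ≤ M(f) ≤ √(d+1) · H(f), where H(f) is the maximum of the absolute values of the coefficients of f. -/
open Polynomial

/-- The height of a polynomial: the maximum of the absolute values of its coefficients. -/
noncomputable def polyHeight (f : Polynomial ℂ) : ℝ :=
  ⨆ i : ℕ, ‖f.coeff i‖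

/-- The Mahler measure of `f = a_d ∏ (X - α_i)`: `|a_d| ∏ max(|α_i|, 1)`. -/
noncomputable def mahlerMeasure (f : Polynomial ℂ) : ℝ :=
  ‖f.leadingCoeff‖ * (f.roots.map fun α => max ‖α‖ 1).prod

noncomputable def sq2 (p : Polynomial ℂ) : ℝ := ∑' i, (‖p.coeff i‖)^2

lemma sq2_summable (p : Polynomial ℂ) : Summable fun i => (‖p.coeff i‖)^2 := by
  apply summable_of_ne_finset_zero (s := p.support)
  intro i hi
  simp [Polynomial.notMem_support_iff.mp hi]

lemma sq2_eq_sum (p : Polynomial ℂ) (n : ℕ) (h : p.natDegree < n) :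
    sq2 p = ∑ i ∈ Finset.range n, (‖p.coeff i‖)^2 := by
  apply tsum_eq_sum
  intro i hi
  rw [Finset.mem_range, not_lt] at hi
  rw [p.coeff_eq_zero_of_natDegree_lt (lt_of_lt_of_le h hi)]
  simp

lemma le_sq2 (p : Polynomial ℂ) (i : ℕ) : (‖p.coeff i‖)^2 ≤ sq2 p :=
  (sq2_summable p).le_tsum i fun _ _ => sq_nonneg _

lemma term_id (a b α : ℂ) :
    (‖a - α * b‖)^2 - (‖(starRingEnd ℂ) α * a - b‖)^2
      = (1 - (‖α‖)^2) * ((‖a‖)^2 - (‖b‖)^2) := by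
  simp only [Complex.sq_norm, Complex.normSq_apply, Complex.sub_re, Complex.sub_im,
    Complex.mul_re, Complex.mul_im, Complex.conj_re, Complex.conj_im]
  ring

lemma sq2_swap (q : Polynomial ℂ) (α : ℂ) :
    sq2 ((X - C α) * q) = sq2 ((C ((starRingEnd ℂ) α) * X - 1) * q) := by
  set n := q.natDegree + 2 with hn
  have h1 : ((X - C α) * q).natDegree < n := by
    refine lt_of_le_of_lt natDegree_mul_le ?_
    rw [natDegree_X_sub_C]; omega
  have h2 : ((C ((starRingEnd ℂ) α) * X - 1) * q).natDegree < n := by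
    refine lt_of_le_of_lt natDegree_mul_le ?_
    have h3 : (C ((starRingEnd ℂ) α) * X - 1 : Polynomial ℂ).natDegree ≤ 1 := by
      refine (natDegree_sub_le _ _).trans ?_
      simp only [natDegree_one, max_le_iff]
      exact ⟨(natDegree_C_mul_le _ _).trans (by simp), by omega⟩
    omega
  rw [sq2_eq_sum _ n h1, sq2_eq_sum _ n h2, ← sub_eq_zero, ← Finset.sum_sub_distrib]
  have key : ∀ i ∈ Finset.range n,
      (‖((X - C α) * q).coeff i‖)^2
        - (‖((C ((starRingEnd ℂ) α) * X - 1) * q).coeff i‖)^2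
      = (1 - (‖α‖)^2)
        * ((‖(X*q).coeff i‖)^2 - (‖(X*q).coeff (i+1)‖)^2) := by
    intro i _
    have e1 : ((X - C α) * q).coeff i = (X*q).coeff i - α * q.coeff i := by
      rw [sub_mul, coeff_sub, coeff_C_mul]
    have e2 : ((C ((starRingEnd ℂ) α) * X - 1) * q).coeff i
        = (starRingEnd ℂ) α * (X*q).coeff i - q.coeff i := by
      rw [sub_mul, coeff_sub, one_mul, mul_assoc, coeff_C_mul]
    rw [e1, e2, coeff_X_mul]
    exact term_id _ _ _
  rw [Finset.sum_congr rfl key, ← Finset.mul_sum, Finset.sum_range_sub']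
  have z0 : (X*q : Polynomial ℂ).coeff 0 = 0 := by simp [mul_coeff_zero]
  have zn : (X*q : Polynomial ℂ).coeff n = 0 := by
    rw [show n = (q.natDegree + 1) + 1 from rfl, coeff_X_mul]
    exact coeff_eq_zero_of_natDegree_lt (by omega)
  simp [z0, zn]

lemma landau_aux : ∀ (k : ℕ) (c : ℂ) (S : Multiset ℂ),
    (S.filter fun α => 1 < ‖α‖).card = k →
    (‖c‖ * (S.map fun α => max (‖α‖) 1).prod)^2
      ≤ sq2 (C c * (S.map fun α => X - C α).prod) := by
  intro k
  induction k with
  | zero =>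
    intro c S hS
    have hprod : (S.map fun α => max (‖α‖) 1).prod = 1 := by
      apply Multiset.prod_eq_one
      intro x hx
      obtain ⟨α, hα, rfl⟩ := Multiset.mem_map.mp hx
      have hno : ¬ 1 < ‖α‖ := by
        intro h
        have hm : α ∈ S.filter fun α => 1 < ‖α‖ := Multiset.mem_filter.mpr ⟨hα, h⟩
        rw [Multiset.card_eq_zero.mp hS] at hm
        simp at hm
      exact max_eq_right (not_lt.mp hno)
    rw [hprod, mul_one]
    set p := C c * (S.map fun α => X - C α).prod with hp
    have hm : (S.map fun α => X - C α).prod.Monic :=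
      monic_multiset_prod_of_monic _ _ fun α _ => monic_X_sub_C α
    have hlc : p.leadingCoeff = c := by
      rw [hp, leadingCoeff_mul, leadingCoeff_C, hm.leadingCoeff, mul_one]
    calc (‖c‖)^2 = (‖p.coeff p.natDegree‖)^2 := by
          rw [coeff_natDegree, hlc]
      _ ≤ sq2 p := le_sq2 p _
  | succ k ih =>
    intro c S hS
    have hpos : 0 < (S.filter fun α => 1 < ‖α‖).card := by rw [hS]; omega
    obtain ⟨α, hαf⟩ := Multiset.card_pos_iff_exists_mem.mp hpos
    have hα1 : 1 < ‖α‖ := (Multiset.mem_filter.mp hαf).2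
    have hαS : α ∈ S := (Multiset.mem_filter.mp hαf).1
    set T := S.erase α with hT
    have hST : S = α ::ₘ T := (Multiset.cons_erase hαS).symm
    set β := ((starRingEnd ℂ) α)⁻¹ with hβ
    have hαne : α ≠ 0 := by
      intro h; rw [h] at hα1; simp at hα1; linarith
    have hcαne : (starRingEnd ℂ) α ≠ 0 := by simpa using hαne
    have hfT : (T.filter fun γ => 1 < ‖γ‖).card = k := by
      have he : (S.filter fun γ => 1 < ‖γ‖)
          = α ::ₘ (T.filter fun γ => 1 < ‖γ‖) := by
        conv_lhs => rw [hST]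
        exact Multiset.filter_cons_of_pos T hα1
      rw [he, Multiset.card_cons] at hS; omega
    have hβ1 : ¬ 1 < ‖β‖ := by
      rw [hβ, norm_inv, Complex.norm_conj]
      exact not_lt.mpr (le_of_lt (inv_lt_one_of_one_lt₀ hα1))
    have hfnew : ((β ::ₘ T).filter fun γ => 1 < ‖γ‖).card = k := by
      rw [Multiset.filter_cons_of_neg T hβ1]; exact hfT
    have H := ih ((starRingEnd ℂ) α * c) (β ::ₘ T) hfnew
    have hfac : (C ((starRingEnd ℂ) α) : Polynomial ℂ) * (X - C β)
        = C ((starRingEnd ℂ) α) * X - 1 := by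
      rw [mul_sub, ← C_mul, mul_inv_cancel₀ hcαne, C_1]
    have hpoly : C ((starRingEnd ℂ) α * c) * ((β ::ₘ T).map fun γ => X - C γ).prod
        = (C ((starRingEnd ℂ) α) * X - 1) * (C c * (T.map fun γ => X - C γ).prod) := by
      rw [Multiset.map_cons, Multiset.prod_cons, C_mul, ← hfac]
      ring
    have hswap : sq2 (C c * (S.map fun γ => X - C γ).prod)
        = sq2 (C ((starRingEnd ℂ) α * c) * ((β ::ₘ T).map fun γ => X - C γ).prod) := by
      rw [hST, Multiset.map_cons, Multiset.prod_cons, hpoly, mul_left_comm]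
      exact sq2_swap _ α
    rw [hswap]
    refine le_trans (le_of_eq ?_) H
    congr 1
    rw [hST, Multiset.map_cons, Multiset.prod_cons, Multiset.map_cons, Multiset.prod_cons,
      norm_mul, Complex.norm_conj, max_eq_left (le_of_lt hα1),
      max_eq_right (not_lt.mp hβ1)]
    ring

lemma polyHeight_bdd (f : Polynomial ℂ) :
    BddAbove (Set.range fun i => ‖f.coeff i‖) := by
  apply Set.Finite.bddAbove
  refine Set.Finite.subset (Set.Finite.insert 0 (f.support.finite_toSet.image
    fun i => ‖f.coeff i‖)) ?_
  rintro x ⟨i, rfl⟩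
  by_cases h : i ∈ f.support
  · exact Set.mem_insert_of_mem _ ⟨i, h, rfl⟩
  · show ‖f.coeff i‖ ∈ _
    rw [Polynomial.notMem_support_iff.mp h]
    simp

lemma coeff_le_height (f : Polynomial ℂ) (i : ℕ) :
    ‖f.coeff i‖ ≤ polyHeight f :=
  le_ciSup (polyHeight_bdd f) i

lemma height_nonneg (f : Polynomial ℂ) : 0 ≤ polyHeight f :=
  le_trans (norm_nonneg _) (coeff_le_height f 0)

lemma maxprod_nonneg (S : Multiset ℂ) :
    0 ≤ (S.map fun α => max (‖α‖) 1).prod := by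
  apply Multiset.prod_nonneg
  intro x hx
  obtain ⟨α, _, rfl⟩ := Multiset.mem_map.mp hx
  exact le_trans zero_le_one (le_max_right _ _)

lemma maxprod_one_le (S : Multiset ℂ) :
    1 ≤ (S.map fun α => max (‖α‖) 1).prod := by
  apply Multiset.one_le_prod
  intro x hx
  obtain ⟨α, _, rfl⟩ := Multiset.mem_map.mp hx
  exact le_max_right _ _

lemma mahler_nonneg (f : Polynomial ℂ) : 0 ≤ _root_.mahlerMeasure f :=
  mul_nonneg (norm_nonneg _) (maxprod_nonneg _)

lemma abs_multiset_sum (s : Multiset ℂ) :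
    ‖s.sum‖ ≤ (s.map norm).sum := by
  induction s using Multiset.induction with
  | empty => simp
  | cons a s ih =>
    simp only [Multiset.sum_cons, Multiset.map_cons]
    exact le_trans (norm_add_le _ _) (by linarith)

lemma sum_le_card_mul (s : Multiset ℝ) (B : ℝ) (h : ∀ x ∈ s, x ≤ B) :
    s.sum ≤ (Multiset.card s) * B := by
  induction s using Multiset.induction with
  | empty => simp
  | cons a s ih =>
    simp only [Multiset.sum_cons, Multiset.card_cons, Nat.cast_succ, add_mul, one_mul]
    have h1 := ih fun x hx => h x (Multiset.mem_cons_of_mem hx)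
    have h2 := h a (Multiset.mem_cons_self a s)
    linarith

lemma prod_abs_le (t S : Multiset ℂ) (h : t ≤ S) :
    (t.map norm).prod ≤ (S.map fun α => max (‖α‖) 1).prod := by
  have h1 : (t.map norm).prod ≤ (t.map fun α => max (‖α‖) 1).prod :=
    Multiset.prod_map_le_prod_map₀ _ _ (fun i _ => norm_nonneg i)
      (fun i _ => le_max_left _ _)
  refine h1.trans ?_
  obtain ⟨u, rfl⟩ := Multiset.le_iff_exists_add.mp h
  rw [Multiset.map_add, Multiset.prod_add]
  exact le_mul_of_one_le_right (maxprod_nonneg t) (maxprod_one_le u)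

lemma esymm_bound (S : Multiset ℂ) (j : ℕ) :
    ‖S.esymm j‖
      ≤ ((Multiset.card S).choose j : ℝ) * (S.map fun α => max (‖α‖) 1).prod := by
  rw [Multiset.esymm]
  refine (abs_multiset_sum _).trans ?_
  rw [Multiset.map_map]
  have hcard : Multiset.card ((S.powersetCard j).map (norm ∘ Multiset.prod))
      = (Multiset.card S).choose j := by
    rw [Multiset.card_map, Multiset.card_powersetCard]
  refine le_trans (sum_le_card_mul _ _ ?_) (le_of_eq (by rw [hcard]))
  intro x hx
  obtain ⟨t, ht, rfl⟩ := Multiset.mem_map.mp hx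
  have hts : t ≤ S := (Multiset.mem_powersetCard.mp ht).1
  simp only [Function.comp_apply]
  rw [show ‖t.prod‖ = (t.map norm).prod from map_multiset_prod (normHom : ℂ →*₀ ℝ) t]
  exact prod_abs_le t S hts

theorem stmt_0 (f : Polynomial ℂ) (hf : f ≠ 0) :
    (2 : ℝ) ^ (-(f.natDegree : ℤ)) * polyHeight f ≤ _root_.mahlerMeasure f ∧
      _root_.mahlerMeasure f ≤ Real.sqrt ((f.natDegree : ℝ) + 1) * polyHeight f := by
  set d := f.natDegree with hd
  have hroots : Multiset.card f.roots = d :=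
    (splits_iff_card_roots).mp (IsAlgClosed.splits f)
  have hfeq : C f.leadingCoeff * (f.roots.map fun a => X - C a).prod = f :=
    C_leadingCoeff_mul_prod_multiset_X_sub_C hroots
  constructor
  · -- lower bound
    have key : ∀ i : ℕ, ‖f.coeff i‖ ≤ (2:ℝ)^d * _root_.mahlerMeasure f := by
      intro i
      by_cases hi : i ≤ d
      · rw [Polynomial.coeff_eq_esymm_roots_of_card hroots hi]
        rw [norm_mul, norm_mul, norm_pow]
        simp only [norm_neg, norm_one, one_pow, mul_one]
        calc ‖f.leadingCoeff‖ * ‖f.roots.esymm (d - i)‖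
            ≤ ‖f.leadingCoeff‖
              * ((d.choose (d-i) : ℝ) * (f.roots.map fun α => max (‖α‖) 1).prod) := by
              apply mul_le_mul_of_nonneg_left _ (norm_nonneg _)
              have := esymm_bound f.roots (d - i)
              rwa [hroots] at this
          _ = (d.choose (d-i) : ℝ) * _root_.mahlerMeasure f := by rw [_root_.mahlerMeasure]; ring
          _ ≤ (2:ℝ)^d * _root_.mahlerMeasure f := by
              apply mul_le_mul_of_nonneg_right _ (mahler_nonneg f)
              have h1 : d.choose (d-i) ≤ 2^d := by
                have h2 : d.choose (d-i) ≤ ∑ m ∈ Finset.range (d+1), d.choose m :=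
                  Finset.single_le_sum (fun m _ => Nat.zero_le _)
                    (Finset.mem_range.mpr (by omega))
                rwa [Nat.sum_range_choose] at h2
              exact_mod_cast h1
      · rw [f.coeff_eq_zero_of_natDegree_lt (by omega)]
        simp only [norm_zero]
        exact mul_nonneg (by positivity) (mahler_nonneg f)
    have hH : polyHeight f ≤ (2:ℝ)^d * _root_.mahlerMeasure f := ciSup_le key
    rw [zpow_neg, zpow_natCast, inv_mul_le_iff₀ (by positivity)]
    exact hH
  · -- upper bound
    have H := landau_aux ((f.roots.filter fun α => 1 < ‖α‖).card)
      f.leadingCoeff f.roots rfl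
    rw [hfeq] at H
    have hM2 : (_root_.mahlerMeasure f)^2 ≤ sq2 f := H
    have hsq : sq2 f ≤ ((d:ℝ) + 1) * (polyHeight f)^2 := by
      rw [sq2_eq_sum f (d+1) (by omega)]
      calc ∑ i ∈ Finset.range (d+1), (‖f.coeff i‖)^2
          ≤ ∑ _i ∈ Finset.range (d+1), (polyHeight f)^2 := by
            apply Finset.sum_le_sum
            intro i _
            exact pow_le_pow_left₀ (norm_nonneg _) (coeff_le_height f i) 2
        _ = ((d:ℝ) + 1) * (polyHeight f)^2 := by
            rw [Finset.sum_const, Finset.card_range]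
            push_cast
            ring
    have h1 : (_root_.mahlerMeasure f)^2 ≤ ((d:ℝ) + 1) * (polyHeight f)^2 := hM2.trans hsq
    have h2 : _root_.mahlerMeasure f ≤ Real.sqrt (((d:ℝ) + 1) * (polyHeight f)^2) :=
      (Real.le_sqrt (mahler_nonneg f) (by positivity)).mpr h1
    rwa [Real.sqrt_mul (by positivity), Real.sqrt_sq (height_nonneg f)] at h2
end

section
/- Let p be a prime and let f, g ∈ ℤ[X] be non-zero polynomials such that their reductions modulo p do not both vanish. If the reductions of f and g modulo p have m common roots in the algebraic closure of 𝔽_p, counted with multiplicities, then m ≤ v_p(Res(f,g)), where v_p denotes the p-adic valuation. -/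
open Polynomial
open scoped Classical

/-- The Sylvester matrix of two polynomials `f` and `g`. -/
noncomputable def sylvesterMatrix {R : Type*} [CommRing R] (f g : Polynomial R) :
    Matrix (Fin (g.natDegree + f.natDegree)) (Fin (g.natDegree + f.natDegree)) R :=
  fun i j =>
    if (i : ℕ) < g.natDegree then
      if (i : ℕ) ≤ (j : ℕ) ∧ (j : ℕ) ≤ (i : ℕ) + f.natDegree then
        f.coeff (f.natDegree + i - j)
      else 0
    else
      if (i : ℕ) - g.natDegree ≤ (j : ℕ) ∧ (j : ℕ) ≤ ((i : ℕ) - g.natDegree) + g.natDegree then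
        g.coeff (g.natDegree + ((i : ℕ) - g.natDegree) - j)
      else 0

/-- The resultant of two polynomials, as the determinant of their Sylvester matrix. -/
noncomputable def resultant {R : Type*} [CommRing R] (f g : Polynomial R) : R :=
  (sylvesterMatrix f g).det

lemma key_sum {F : Type*} [Field F] (u q : Polynomial F) (dU dQ : ℕ) (hq : q.natDegree ≤ dQ)
    (hu : ∀ k, dU ≤ k → u.coeff k = 0) (j : ℕ) :
    ∑ a ∈ Finset.range dU, u.coeff a * (if a ≤ j ∧ j ≤ a + dQ then q.coeff (dQ + a - j) else 0)
      = (u * reflect dQ q).coeff j := by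
  rw [coeff_mul, Finset.Nat.sum_antidiagonal_eq_sum_range_succ_mk]
  set N := max dU (j + 1) with hN
  have h1 : ∑ a ∈ Finset.range dU,
      u.coeff a * (if a ≤ j ∧ j ≤ a + dQ then q.coeff (dQ + a - j) else 0)
      = ∑ a ∈ Finset.range N,
      u.coeff a * (if a ≤ j ∧ j ≤ a + dQ then q.coeff (dQ + a - j) else 0) := by
    apply Finset.sum_subset (Finset.range_subset_range.2 (le_max_left _ _))
    intro a _ ha
    rw [hu a (by simpa using ha)]
    ring
  have h2 : ∑ a ∈ Finset.range (j + 1), u.coeff a * (reflect dQ q).coeff (j - a)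
      = ∑ a ∈ Finset.range N,
      u.coeff a * (if a ≤ j ∧ j ≤ a + dQ then q.coeff (dQ + a - j) else 0) := by
    rw [← Finset.sum_subset (Finset.range_subset_range.2 (le_max_right dU (j+1)))
      (by intro a _ ha
          simp only [Finset.mem_range, not_lt] at ha
          have : ¬ (a ≤ j ∧ j ≤ a + dQ) := by omega
          rw [if_neg this]; ring)]
    apply Finset.sum_congr rfl
    intro a ha
    simp only [Finset.mem_range] at ha
    have haj : a ≤ j := by omega
    congr 1
    rw [coeff_reflect]
    by_cases h : j ≤ a + dQ
    · rw [if_pos ⟨haj, h⟩, revAt_le (by omega)]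
      congr 1; omega
    · rw [if_neg (by tauto), revAt_eq_self_of_lt (by omega),
        coeff_eq_zero_of_natDegree_lt (by omega)]
  rw [h1, h2]

lemma vecMul_syl (p : ℕ) [Fact p.Prime] (f g : Polynomial ℤ) (u w : Polynomial (ZMod p))
    (hu : ∀ k, g.natDegree ≤ k → u.coeff k = 0)
    (hw : ∀ k, f.natDegree ≤ k → w.coeff k = 0) (j : Fin (g.natDegree + f.natDegree)) :
    Matrix.vecMul
      (fun i : Fin (g.natDegree + f.natDegree) =>
        if (i : ℕ) < g.natDegree then u.coeff i else w.coeff ((i : ℕ) - g.natDegree))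
      ((sylvesterMatrix f g).map (Int.cast : ℤ → ZMod p)) j
    = (u * reflect f.natDegree (f.map (Int.castRingHom (ZMod p)))
        + w * reflect g.natDegree (g.map (Int.castRingHom (ZMod p)))).coeff j := by
  have hfb : (f.map (Int.castRingHom (ZMod p))).natDegree ≤ f.natDegree := natDegree_map_le
  have hgb : (g.map (Int.castRingHom (ZMod p))).natDegree ≤ g.natDegree := natDegree_map_le
  rw [coeff_add, ← key_sum u _ g.natDegree f.natDegree hfb hu j,
    ← key_sum w _ f.natDegree g.natDegree hgb hw j]
  simp only [Matrix.vecMul, dotProduct, Matrix.map_apply, sylvesterMatrix]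
  rw [Fin.sum_univ_add]
  congr 1
  · rw [← Fin.sum_univ_eq_sum_range
      (fun i => u.coeff i * (if i ≤ (j:ℕ) ∧ (j:ℕ) ≤ i + f.natDegree
        then (f.map (Int.castRingHom (ZMod p))).coeff (f.natDegree + i - (j:ℕ)) else 0))]
    apply Finset.sum_congr rfl
    intro i _
    have h1 : ((Fin.castAdd f.natDegree i : Fin (g.natDegree + f.natDegree)) : ℕ) = (i:ℕ) := rfl
    rw [h1, if_pos i.isLt, if_pos i.isLt]
    congr 1
    split_ifs with h
    · push_cast
      rw [coeff_map]
      rfl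
    · push_cast
      rfl
  · rw [← Fin.sum_univ_eq_sum_range
      (fun i => w.coeff i * (if i ≤ (j:ℕ) ∧ (j:ℕ) ≤ i + g.natDegree
        then (g.map (Int.castRingHom (ZMod p))).coeff (g.natDegree + i - (j:ℕ)) else 0))]
    apply Finset.sum_congr rfl
    intro i _
    have h1 : ((Fin.natAdd g.natDegree i : Fin (g.natDegree + f.natDegree)) : ℕ)
        = g.natDegree + (i:ℕ) := rfl
    have hcond : ¬ g.natDegree + (i:ℕ) < g.natDegree := by omega
    simp only [h1, Nat.add_sub_cancel_left, hcond, if_false]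
    congr 1
    split_ifs with h
    · simp [coeff_map]
    · simp

lemma det_dvd_of_kernel (p : ℕ) [hp : Fact p.Prime] {N r : ℕ} (M : Matrix (Fin N) (Fin N) ℤ)
    (v : Fin r → Fin N → ZMod p) (hli : LinearIndependent (ZMod p) v)
    (hker : ∀ s, Matrix.vecMul (v s) (M.map (Int.cast : ℤ → ZMod p)) = 0) :
    (p : ℤ) ^ r ∣ M.det := by
  classical
  have hs : LinearIndepOn (ZMod p) id (Set.range v) :=
    hli.linearIndepOn_id
  let b := Module.Basis.extend hs
  haveI : Fintype (hs.extend (Set.subset_univ (Set.range v))) :=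
    FiniteDimensional.fintypeBasisIndex b
  have hcard : Fintype.card (hs.extend (Set.subset_univ (Set.range v))) = N := by
    rw [← Module.finrank_eq_card_basis b, Module.finrank_fin_fun]
  let e := Fintype.equivFinOfCardEq hcard
  let b' := b.reindex e
  -- the injection of Fin r into Fin N
  have hmem : ∀ s : Fin r, v s ∈ hs.extend (Set.subset_univ (Set.range v)) := fun s =>
    hs.subset_extend _ ⟨s, rfl⟩
  let ι : Fin r → Fin N := fun s => e ⟨v s, hmem s⟩
  have hι : Function.Injective ι := by
    intro a b hab
    simp only [ι] at hab
    have := e.injective hab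
    exact hli.injective (congrArg Subtype.val this)
  have hb' : ∀ s, b' (ι s) = v s := by
    intro s
    simp only [b', ι, Module.Basis.reindex_apply, Equiv.symm_apply_apply]
    exact Module.Basis.extend_apply_self hs _
  -- the invertible matrix over ZMod p whose columns are the basis vectors
  let B : Matrix (Fin N) (Fin N) (ZMod p) := (Pi.basisFun (ZMod p) (Fin N)).toMatrix ⇑b'
  have hBdet : IsUnit B.det := by
    have h1 : B * b'.toMatrix (Pi.basisFun (ZMod p) (Fin N)) = 1 :=
      Module.Basis.toMatrix_mul_toMatrix_flip _ _
    have := congrArg Matrix.det h1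
    rw [Matrix.det_mul, Matrix.det_one] at this
    exact IsUnit.of_mul_eq_one _ this
  have hBapply : ∀ i j, B i j = b' j i := by
    intro i j
    simp [B, Module.Basis.toMatrix_apply]
  -- integer lift
  let B' : Matrix (Fin N) (Fin N) ℤ := fun i j => ((b' j i).val : ℤ)
  have hB'map : B'.map (Int.cast : ℤ → ZMod p) = B := by
    ext i j
    rw [Matrix.map_apply]
    simp [B', hBapply, ZMod.natCast_val, ZMod.cast_id]
  have hB'det : ¬ (p : ℤ) ∣ B'.det := by
    intro hdvd
    rw [← ZMod.intCast_zmod_eq_zero_iff_dvd] at hdvd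
    rw [show ((B'.det : ℤ) : ZMod p) = (B'.map (Int.cast : ℤ → ZMod p)).det from
      RingHom.map_det (Int.castRingHom (ZMod p)) B', hB'map] at hdvd
    rw [hdvd] at hBdet
    exact (not_isUnit_zero hBdet : False)
  -- the product matrix
  let A : Matrix (Fin N) (Fin N) ℤ := M.transpose * B'
  have hAmap : A.map (Int.cast : ℤ → ZMod p) = (M.transpose.map (Int.cast : ℤ → ZMod p)) * B := by
    rw [← hB'map]
    exact Matrix.map_mul (f := Int.castRingHom (ZMod p))
  have hAdvd : ∀ i (s : Fin r), (p : ℤ) ∣ A i (ι s) := by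
    intro i s
    rw [← ZMod.intCast_zmod_eq_zero_iff_dvd]
    have h0 : (A.map (Int.cast : ℤ → ZMod p)) i (ι s) = 0 := by
      rw [hAmap]
      have : ((M.transpose.map (Int.cast : ℤ → ZMod p)) * B) i (ι s)
          = Matrix.vecMul (v s) (M.map (Int.cast : ℤ → ZMod p)) i := by
        simp only [Matrix.mul_apply, Matrix.vecMul, dotProduct, Matrix.transpose_apply,
          Matrix.map_apply]
        apply Finset.sum_congr rfl
        intro k _
        rw [hBapply, hb']
        ring
      rw [this, hker s]
      rfl
    simpa [Matrix.map_apply] using h0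
  -- pull out the factor p from the r columns indexed by ι
  set S : Finset (Fin N) := Finset.image ι Finset.univ with hS
  have hcardS : S.card = r := by
    rw [hS, Finset.card_image_of_injective _ hι, Finset.card_univ, Fintype.card_fin]
  have hdvdS : ∀ i j, j ∈ S → (p : ℤ) ∣ A i j := by
    intro i j hj
    rw [hS, Finset.mem_image] at hj
    obtain ⟨s, _, rfl⟩ := hj
    exact hAdvd i s
  let D : Matrix (Fin N) (Fin N) ℤ := fun i j => if j ∈ S then A i j / p else A i j
  have hAD : A = Matrix.of (fun i j => (if j ∈ S then (p : ℤ) else 1) * D i j) := by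
    ext i j
    by_cases hj : j ∈ S
    · simp only [Matrix.of_apply, D, if_pos hj]
      rw [Int.mul_ediv_cancel' (hdvdS i j hj)]
    · simp [Matrix.of_apply, D, if_neg hj]
  have hdetA : A.det = (p : ℤ) ^ r * D.det := by
    rw [hAD, Matrix.det_mul_row]
    congr 1
    rw [Finset.prod_ite_mem, Finset.univ_inter, Finset.prod_const, hcardS]
  have hdvd2 : (p : ℤ) ^ r ∣ M.det * B'.det := by
    have : A.det = M.transpose.det * B'.det := Matrix.det_mul _ _
    rw [Matrix.det_transpose] at this
    exact ⟨D.det, by rw [← this, hdetA]⟩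
  have hcop : IsCoprime ((p : ℤ) ^ r) B'.det := by
    have hprime : Prime (p : ℤ) := Nat.prime_iff_prime_int.mp hp.out
    exact (IsCoprime.pow_left ((hprime.irreducible.coprime_iff_not_dvd).mpr hB'det))
  exact hcop.dvd_of_dvd_mul_right hdvd2

lemma rootMultiplicity_gcd {K : Type*} [Field K] (a : K) (f g : Polynomial K)
    (hf : f ≠ 0) (hg : g ≠ 0) :
    rootMultiplicity a (EuclideanDomain.gcd f g)
      = min (rootMultiplicity a f) (rootMultiplicity a g) := by
  have hd : EuclideanDomain.gcd f g ≠ 0 := by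
    intro h
    exact hf (EuclideanDomain.gcd_eq_zero_iff.mp h).1
  apply le_antisymm
  · apply le_min
    · exact (le_rootMultiplicity_iff hf).mpr
        ((pow_rootMultiplicity_dvd _ a).trans (EuclideanDomain.gcd_dvd_left f g))
    · exact (le_rootMultiplicity_iff hg).mpr
        ((pow_rootMultiplicity_dvd _ a).trans (EuclideanDomain.gcd_dvd_right f g))
  · rw [le_rootMultiplicity_iff hd]
    exact EuclideanDomain.dvd_gcd
      ((pow_dvd_pow _ (min_le_left _ _)).trans (pow_rootMultiplicity_dvd f a))
      ((pow_dvd_pow _ (min_le_right _ _)).trans (pow_rootMultiplicity_dvd g a))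

lemma roots_inter_eq_roots_gcd {K : Type*} [Field K] [IsAlgClosed K] (f g : Polynomial K)
    (hf : f ≠ 0) (hg : g ≠ 0) :
    f.roots ∩ g.roots = (EuclideanDomain.gcd f g).roots := by
  ext a
  rw [Multiset.count_inter, count_roots, count_roots, count_roots,
    rootMultiplicity_gcd a f g hf hg]

lemma natDegree_reflect_le {K : Type*} [Semiring K] {q : Polynomial K} {N : ℕ}
    (h : q.natDegree ≤ N) : (reflect N q).natDegree ≤ N := by
  apply natDegree_le_iff_coeff_eq_zero.mpr
  intro m hm
  rw [coeff_reflect, revAt_eq_self_of_lt hm]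
  exact coeff_eq_zero_of_natDegree_lt (lt_of_le_of_lt h hm)

-- now the counting part of the main theorem, as a standalone lemma
lemma card_eq_natDegree_gcd (p : ℕ) [hp : Fact p.Prime] (f g : Polynomial ℤ)
    (hfb : f.map (Int.castRingHom (ZMod p)) ≠ 0) (hgb : g.map (Int.castRingHom (ZMod p)) ≠ 0) :
    Multiset.card
      ((f.map (Int.castRingHom (AlgebraicClosure (ZMod p)))).roots ∩
        (g.map (Int.castRingHom (AlgebraicClosure (ZMod p)))).roots)
    = (EuclideanDomain.gcd (f.map (Int.castRingHom (ZMod p)))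
        (g.map (Int.castRingHom (ZMod p)))).natDegree := by
  set K := AlgebraicClosure (ZMod p)
  set φ := algebraMap (ZMod p) K with hφ
  have hcomp : ∀ q : Polynomial ℤ,
      q.map (Int.castRingHom K) = (q.map (Int.castRingHom (ZMod p))).map φ := by
    intro q
    rw [Polynomial.map_map]
    congr 1
  have hfK : (f.map (Int.castRingHom (ZMod p))).map φ ≠ 0 := Polynomial.map_ne_zero hfb
  have hgK : (g.map (Int.castRingHom (ZMod p))).map φ ≠ 0 := Polynomial.map_ne_zero hgb
  rw [hcomp f, hcomp g, roots_inter_eq_roots_gcd _ _ hfK hgK, Polynomial.gcd_map φ]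
  have hsplits : (((EuclideanDomain.gcd (f.map (Int.castRingHom (ZMod p)))
      (g.map (Int.castRingHom (ZMod p)))).map φ)).Splits :=
    IsAlgClosed.splits _
  rw [(Polynomial.splits_iff_card_roots).mp hsplits, Polynomial.natDegree_map φ]

/-- If the reductions of `f, g ∈ ℤ[X]` modulo a prime `p` do not both vanish and have `m`
common roots in `𝔽̄_p` counted with multiplicity (i.e. the minimum of the two multiplicities
at each common root, which is the cardinality of the intersection of the two root multisets),
then `m ≤ v_p(Res(f,g))`, i.e. `p^m` divides the resultant of `f` and `g`. -/
theorem stmt_3 (p : ℕ) [hp : Fact p.Prime] (f g : Polynomial ℤ) (hf : f ≠ 0) (hg : g ≠ 0)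
    (hnot : ¬(f.map (Int.castRingHom (ZMod p)) = 0 ∧ g.map (Int.castRingHom (ZMod p)) = 0))
    (m : ℕ)
    (hm : m = Multiset.card
      ((f.map (Int.castRingHom (AlgebraicClosure (ZMod p)))).roots ∩
        (g.map (Int.castRingHom (AlgebraicClosure (ZMod p)))).roots)) :
    (p : ℤ) ^ m ∣ _root_.resultant f g := by
  classical
  set K := AlgebraicClosure (ZMod p) with hK
  have hcomp : ∀ q : Polynomial ℤ,
      q.map (Int.castRingHom K) = (q.map (Int.castRingHom (ZMod p))).map (algebraMap (ZMod p) K) := by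
    intro q
    rw [Polynomial.map_map]
    congr 1
  by_cases hfb : f.map (Int.castRingHom (ZMod p)) = 0
  · have h0 : f.map (Int.castRingHom K) = 0 := by rw [hcomp f, hfb, Polynomial.map_zero]
    have hm0 : m = 0 := by rw [hm, h0]; simp
    rw [hm0, pow_zero]
    exact one_dvd _
  by_cases hgb : g.map (Int.castRingHom (ZMod p)) = 0
  · have h0 : g.map (Int.castRingHom K) = 0 := by rw [hcomp g, hgb, Polynomial.map_zero]
    have hm0 : m = 0 := by rw [hm, h0]; simp
    rw [hm0, pow_zero]
    exact one_dvd _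
  -- main case
  set fb := f.map (Int.castRingHom (ZMod p)) with hfbdef
  set gb := g.map (Int.castRingHom (ZMod p)) with hgbdef
  set d := EuclideanDomain.gcd fb gb with hddef
  have hmr : m = d.natDegree := by rw [hm, card_eq_natDegree_gcd p f g hfb hgb]
  set r := d.natDegree
  have hd : d ≠ 0 := fun h => hfb (EuclideanDomain.gcd_eq_zero_iff.mp h).1
  have hdf : d ∣ fb := EuclideanDomain.gcd_dvd_left fb gb
  have hdg : d ∣ gb := EuclideanDomain.gcd_dvd_right fb gb
  set f1 := fb / d with hf1def
  set g1 := gb / d with hg1def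
  have hf1 : d * f1 = fb := EuclideanDomain.mul_div_cancel' hd hdf
  have hg1 : d * g1 = gb := EuclideanDomain.mul_div_cancel' hd hdg
  have hf1ne : f1 ≠ 0 := by
    intro h; rw [h, mul_zero] at hf1; exact hfb hf1.symm
  have hg1ne : g1 ≠ 0 := by
    intro h; rw [h, mul_zero] at hg1; exact hgb hg1.symm
  have hdegfb : fb.natDegree ≤ f.natDegree := natDegree_map_le
  have hdeggb : gb.natDegree ≤ g.natDegree := natDegree_map_le
  have hrf : r ≤ fb.natDegree := natDegree_le_of_dvd hdf hfb
  have hrg : r ≤ gb.natDegree := natDegree_le_of_dvd hdg hgb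
  have hdegf1 : f1.natDegree = fb.natDegree - r := by
    have h1 : fb.natDegree = r + f1.natDegree := by rw [← hf1, natDegree_mul hd hf1ne]
    omega
  have hdegg1 : g1.natDegree = gb.natDegree - r := by
    have h1 : gb.natDegree = r + g1.natDegree := by rw [← hg1, natDegree_mul hd hg1ne]
    omega
  set Wf := reflect (f.natDegree - r) f1 with hWfdef
  set Wg := reflect (g.natDegree - r) g1 with hWgdef
  have hreflf : reflect f.natDegree fb = Wf * reflect r d := by
    have h1 : f1.natDegree ≤ f.natDegree - r := by omega
    have h2 : (f.natDegree - r) + r = f.natDegree := by omega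
    rw [← hf1, mul_comm d f1, ← h2, reflect_mul f1 d h1 le_rfl]
  have hreflg : reflect g.natDegree gb = Wg * reflect r d := by
    have h1 : g1.natDegree ≤ g.natDegree - r := by omega
    have h2 : (g.natDegree - r) + r = g.natDegree := by omega
    rw [← hg1, mul_comm d g1, ← h2, reflect_mul g1 d h1 le_rfl]
  set u : Fin r → Polynomial (ZMod p) := fun s => X ^ (s : ℕ) * Wg with hudef
  set w : Fin r → Polynomial (ZMod p) := fun s => -(X ^ (s : ℕ) * Wf) with hwdef
  have hdegu : ∀ s : Fin r, (u s).natDegree < g.natDegree := by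
    intro s
    have h1 : (u s).natDegree ≤ (s : ℕ) + Wg.natDegree := by
      refine le_trans (natDegree_mul_le) ?_
      simp [natDegree_X_pow]
    have h2 : Wg.natDegree ≤ g.natDegree - r := natDegree_reflect_le (by omega)
    have := s.isLt
    omega
  have hdegw : ∀ s : Fin r, (w s).natDegree < f.natDegree := by
    intro s
    have h1 : (w s).natDegree ≤ (s : ℕ) + Wf.natDegree := by
      refine le_trans (le_of_eq (natDegree_neg _)) (le_trans natDegree_mul_le ?_)
      simp [natDegree_X_pow]
    have h2 : Wf.natDegree ≤ f.natDegree - r := natDegree_reflect_le (by omega)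
    have := s.isLt
    omega
  have hu : ∀ (s : Fin r) k, g.natDegree ≤ k → (u s).coeff k = 0 := fun s k hk =>
    coeff_eq_zero_of_natDegree_lt (lt_of_lt_of_le (hdegu s) hk)
  have hw : ∀ (s : Fin r) k, f.natDegree ≤ k → (w s).coeff k = 0 := fun s k hk =>
    coeff_eq_zero_of_natDegree_lt (lt_of_lt_of_le (hdegw s) hk)
  have hkernel : ∀ s : Fin r,
      u s * reflect f.natDegree fb + w s * reflect g.natDegree gb = 0 := by
    intro s
    rw [hreflf, hreflg, hudef, hwdef]
    ring
  set v : Fin r → Fin (g.natDegree + f.natDegree) → ZMod p := fun s i =>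
    if (i : ℕ) < g.natDegree then (u s).coeff i else (w s).coeff ((i : ℕ) - g.natDegree)
    with hvdef
  have hker : ∀ s, Matrix.vecMul (v s)
      ((sylvesterMatrix f g).map (Int.cast : ℤ → ZMod p)) = 0 := by
    intro s
    funext j
    rw [hvdef]
    rw [vecMul_syl p f g (u s) (w s) (hu s) (hw s) j, hkernel s]
    simp
  have hWgNe : Wg ≠ 0 := by
    rw [hWgdef]
    simpa [reflect_eq_zero_iff] using hg1ne
  have hli : LinearIndependent (ZMod p) v := by
    rw [Fintype.linearIndependent_iff]
    intro c hc
    have hsum : (∑ s : Fin r, c s • u s) = 0 := by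
      ext k
      rw [finset_sum_coeff]
      by_cases hk : k < g.natDegree
      · have hkk : k < g.natDegree + f.natDegree := by omega
        have := congrFun hc ⟨k, hkk⟩
        simp only [Finset.sum_apply, Pi.smul_apply, smul_eq_mul, Pi.zero_apply] at this
        simp only [hvdef] at this
        simp only [coeff_smul, smul_eq_mul, coeff_zero]
        rw [← this]
        apply Finset.sum_congr rfl
        intro s _
        rw [if_pos (show ((⟨k, hkk⟩ : Fin (g.natDegree + f.natDegree)) : ℕ) < g.natDegree from hk)]
      · push_neg at hk
        simp only [coeff_smul, smul_eq_mul, coeff_zero]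
        apply Finset.sum_eq_zero
        intro s _
        rw [hu s k hk, mul_zero]
    have hP : (∑ s : Fin r, c s • (X : Polynomial (ZMod p)) ^ (s : ℕ)) * Wg = 0 := by
      rw [Finset.sum_mul]
      rw [← hsum]
      apply Finset.sum_congr rfl
      intro s _
      rw [smul_mul_assoc, hudef]
    have hP0 : (∑ s : Fin r, c s • (X : Polynomial (ZMod p)) ^ (s : ℕ)) = 0 := by
      rcases mul_eq_zero.mp hP with h | h
      · exact h
      · exact absurd h hWgNe
    intro s
    have := congrArg (fun q : Polynomial (ZMod p) => q.coeff (s : ℕ)) hP0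
    simp only [finset_sum_coeff, coeff_smul, coeff_X_pow, smul_eq_mul, coeff_zero] at this
    rw [Finset.sum_eq_single s] at this
    · simpa using this
    · intro t _ hts
      rw [if_neg (fun h => hts (Fin.ext h.symm)), mul_zero]
    · intro hns
      exact absurd (Finset.mem_univ s) hns
  have := det_dvd_of_kernel p (sylvesterMatrix f g) v hli hker
  rw [hmr]
  exact this
end

section
/- Let E be an elliptic curve defined by Y² = X³ + aX + b over ℚ, and let Ψ_n be the univariate division polynomials (Ψ_n = ψ_n if n is odd, Ψ_n = ψ_n/Y if n is even). There exists an effectively computable constant c depending only on E such that h(Ψ_n) ≤ c·n² for all integers n ≥ 1, where h denotes the logarithmic height (log of the maximum absolute value of the coefficients, or 0 if that is < 1). -/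
open Polynomial

/-- The logarithmic height of a polynomial with rational coefficients:
`h(f) = max (0, log H(f))` where `H(f)` is the maximum absolute value of the coefficients. -/
noncomputable def polyLogHeight (f : Polynomial ℚ) : ℝ :=
  max 0 (Real.log (⨆ i : ℕ, |((f.coeff i : ℚ) : ℝ)|))

/-- The univariate division polynomial `Ψₙ` of the paper: `ψₙ` for odd `n` and `ψₙ/Y` for
even `n`; in terms of Mathlib's `preΨ'` (where `ψₙ = preΨ'ₙ · 2Y` for even `n` on a short
Weierstrass curve), it is `preΨ'ₙ` for odd `n` and `2 · preΨ'ₙ` for even `n`. -/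
noncomputable def paperPsi (W : WeierstrassCurve ℚ) (n : ℕ) : Polynomial ℚ :=
  if Odd n then W.preΨ' n else 2 * W.preΨ' n

section AuxDivPolyHeight

open Finset

noncomputable def absPoly (f : ℚ[X]) : ℚ[X] := ⟨⟨f.toFinsupp.coeff.mapRange (fun q => |q|) abs_zero⟩⟩

lemma coeff_absPoly (f : ℚ[X]) (i : ℕ) : (absPoly f).coeff i = |f.coeff i| := by
  simp [absPoly, Polynomial.coeff, Finsupp.mapRange_apply]

lemma natDegree_absPoly_le (f : ℚ[X]) : (absPoly f).natDegree ≤ f.natDegree := by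
  refine Polynomial.natDegree_le_iff_coeff_eq_zero.2 fun N hN => ?_
  rw [coeff_absPoly, abs_eq_zero]
  exact Polynomial.coeff_eq_zero_of_natDegree_lt hN

noncomputable def Npoly (f : ℚ[X]) : ℚ := (absPoly f).eval 1

lemma Npoly_eq_sum (f : ℚ[X]) {D : ℕ} (hD : f.natDegree < D) :
    Npoly f = ∑ i ∈ range D, |f.coeff i| := by
  rw [Npoly, Polynomial.eval_eq_sum_range' (lt_of_le_of_lt (natDegree_absPoly_le f) hD)]
  simp [coeff_absPoly]

example (f : ℚ[X]) : True := trivial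

lemma Npoly_nonneg (f : ℚ[X]) : 0 ≤ Npoly f := by
  rw [Npoly_eq_sum f (Nat.lt_succ_self _)]
  exact Finset.sum_nonneg fun i _ => abs_nonneg _

lemma abs_coeff_le_Npoly (f : ℚ[X]) (i : ℕ) : |f.coeff i| ≤ Npoly f := by
  by_cases hi : i ≤ f.natDegree
  · rw [Npoly_eq_sum f (Nat.lt_succ_self _)]
    exact Finset.single_le_sum (f := fun j => |f.coeff j|) (fun j _ => abs_nonneg _)
      (Finset.mem_range.2 (Nat.lt_succ_of_le hi))
  · rw [Polynomial.coeff_eq_zero_of_natDegree_lt (lt_of_not_ge hi), abs_zero]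
    exact Npoly_nonneg f

lemma Npoly_sub_le (f g : ℚ[X]) : Npoly (f - g) ≤ Npoly f + Npoly g := by
  set D := (f - g).natDegree + f.natDegree + g.natDegree + 1 with hDdef
  rw [Npoly_eq_sum f (D := D) (by omega), Npoly_eq_sum g (D := D) (by omega),
    Npoly_eq_sum (f - g) (D := D) (by omega),
    ← Finset.sum_add_distrib]
  refine Finset.sum_le_sum fun i _ => ?_
  rw [Polynomial.coeff_sub]
  exact abs_sub _ _

lemma Npoly_mul_le (f g : ℚ[X]) : Npoly (f * g) ≤ Npoly f * Npoly g := by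
  set D := f.natDegree + g.natDegree + 1 with hDdef
  have hfg : (f * g).natDegree < D := Nat.lt_succ_of_le (Polynomial.natDegree_mul_le)
  have hA : (absPoly f * absPoly g).natDegree < D :=
    Nat.lt_succ_of_le (le_trans Polynomial.natDegree_mul_le
      (add_le_add (natDegree_absPoly_le f) (natDegree_absPoly_le g)))
  calc Npoly (f * g) = ∑ i ∈ range D, |(f * g).coeff i| := Npoly_eq_sum _ hfg
    _ ≤ ∑ i ∈ range D, (absPoly f * absPoly g).coeff i := by
        refine Finset.sum_le_sum fun i _ => ?_
        rw [Polynomial.coeff_mul, Polynomial.coeff_mul]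
        refine le_trans (Finset.abs_sum_le_sum_abs _ _) (le_of_eq ?_)
        refine Finset.sum_congr rfl fun p _ => ?_
        rw [abs_mul, coeff_absPoly, coeff_absPoly]
    _ = (absPoly f * absPoly g).eval 1 := by
        rw [Polynomial.eval_eq_sum_range' hA]; simp
    _ = Npoly f * Npoly g := by rw [Polynomial.eval_mul]; rfl

lemma Npoly_one : Npoly (1 : ℚ[X]) = 1 := by
  rw [Npoly_eq_sum (1 : ℚ[X]) (D := 1) (by simp)]
  simp

lemma Npoly_pow_le (f : ℚ[X]) (k : ℕ) : Npoly (f ^ k) ≤ Npoly f ^ k := by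
  induction k with
  | zero => simp [Npoly_one]
  | succ k ih =>
      rw [pow_succ, pow_succ]
      exact le_trans (Npoly_mul_le _ _)
        (mul_le_mul_of_nonneg_right ih (Npoly_nonneg f) |>.trans
          (le_of_eq rfl))

lemma Npoly_two_mul_le (f : ℚ[X]) : Npoly (2 * f) ≤ 2 * Npoly f := by
  have h2 : (2 : ℚ[X]) = Polynomial.C (2 : ℚ) := (map_ofNat Polynomial.C 2).symm
  have : Npoly ((2 : ℚ[X])) = 2 := by
    rw [h2, Npoly_eq_sum _ (D := 1) (by simp)]
    simp
  calc Npoly (2 * f) ≤ Npoly 2 * Npoly f := Npoly_mul_le _ _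
    _ = 2 * Npoly f := by rw [this]

lemma Npoly_zero : Npoly (0 : ℚ[X]) = 0 := by
  rw [Npoly_eq_sum (0 : ℚ[X]) (D := 1) (by simp)]; simp

lemma Npoly_mul3_le (p q r : ℚ[X]) : Npoly (p * q * r) ≤ Npoly p * Npoly q * Npoly r :=
  le_trans (Npoly_mul_le _ _)
    (mul_le_mul_of_nonneg_right (Npoly_mul_le p q) (Npoly_nonneg r))

lemma Npoly_bound3 {x y z : ℚ[X]} {p q r : ℚ} (i j k : ℕ)
    (hx : Npoly x ≤ p) (hy : Npoly y ≤ q) (hz : Npoly z ≤ r) :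
    Npoly (x ^ i * y ^ j * z ^ k) ≤ p ^ i * q ^ j * r ^ k := by
  have hp : 0 ≤ p := le_trans (Npoly_nonneg x) hx
  have hq : 0 ≤ q := le_trans (Npoly_nonneg y) hy
  have hr : 0 ≤ r := le_trans (Npoly_nonneg z) hz
  have bx : Npoly (x ^ i) ≤ p ^ i :=
    le_trans (Npoly_pow_le x i) (pow_le_pow_left₀ (Npoly_nonneg x) hx i)
  have by' : Npoly (y ^ j) ≤ q ^ j :=
    le_trans (Npoly_pow_le y j) (pow_le_pow_left₀ (Npoly_nonneg y) hy j)
  have bz : Npoly (z ^ k) ≤ r ^ k :=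
    le_trans (Npoly_pow_le z k) (pow_le_pow_left₀ (Npoly_nonneg z) hz k)
  calc Npoly (x ^ i * y ^ j * z ^ k) ≤ Npoly (x ^ i) * Npoly (y ^ j) * Npoly (z ^ k) :=
        Npoly_mul3_le _ _ _
    _ ≤ p ^ i * q ^ j * r ^ k :=
        mul_le_mul (mul_le_mul bx by' (Npoly_nonneg _) (pow_nonneg hp i))
          bz (Npoly_nonneg _) (mul_nonneg (pow_nonneg hp i) (pow_nonneg hq j))

lemma pow_collapse (B : ℚ) (a b c i j k : ℕ) :
    (B ^ a) ^ i * (B ^ b) ^ j * (B ^ c) ^ k = B ^ (a * i + b * j + c * k) := by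
  rw [← pow_mul, ← pow_mul, ← pow_mul, ← pow_add, ← pow_add]

lemma key (W : WeierstrassCurve ℚ) :
    ∃ B : ℚ, 2 ≤ B ∧ ∀ n : ℕ, Npoly (W.preΨ' n) ≤ B ^ (n * (n - 1)) := by
  set B : ℚ := 2 + Npoly (W.Ψ₂Sq ^ 2) + Npoly (W.preΨ' 3) + Npoly (W.preΨ' 4) +
    Npoly (W.preΨ' 5) + Npoly (W.preΨ' 6) with hBdef
  have hn0 := Npoly_nonneg (W.Ψ₂Sq ^ 2)
  have hn3 := Npoly_nonneg (W.preΨ' 3)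
  have hn4 := Npoly_nonneg (W.preΨ' 4)
  have hn5 := Npoly_nonneg (W.preΨ' 5)
  have hn6 := Npoly_nonneg (W.preΨ' 6)
  have hB2 : 2 ≤ B := by rw [hBdef]; linarith
  have hQ : Npoly (W.Ψ₂Sq ^ 2) ≤ B := by rw [hBdef]; linarith
  have hb3 : Npoly (W.preΨ' 3) ≤ B := by rw [hBdef]; linarith
  have hb4 : Npoly (W.preΨ' 4) ≤ B := by rw [hBdef]; linarith
  have hb5 : Npoly (W.preΨ' 5) ≤ B := by rw [hBdef]; linarith
  have hb6 : Npoly (W.preΨ' 6) ≤ B := by rw [hBdef]; linarith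
  clear hBdef
  clear_value B
  have hB1 : 1 ≤ B := by linarith
  have hB0 : 0 ≤ B := by linarith
  have hite1 : ∀ m : ℕ, Npoly (if Even m then W.Ψ₂Sq ^ 2 else 1) ≤ B ^ 1 := by
    intro m; rw [pow_one]; split_ifs
    · exact hQ
    · exact le_trans (le_of_eq Npoly_one) hB1
  have hite2 : ∀ m : ℕ, Npoly (if Even m then (1 : ℚ[X]) else W.Ψ₂Sq ^ 2) ≤ B ^ 1 := by
    intro m; rw [pow_one]; split_ifs
    · exact le_trans (le_of_eq Npoly_one) hB1
    · exact hQ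
  refine ⟨B, hB2, ?_⟩
  intro n
  induction n using Nat.strong_induction_on with
  | _ n ih =>
  by_cases hn7 : n < 7
  · interval_cases n
    · rw [W.preΨ'_zero, Npoly_zero]
      exact pow_nonneg hB0 _
    · rw [W.preΨ'_one, Npoly_one]
      exact one_le_pow₀ hB1
    · rw [W.preΨ'_two, Npoly_one]
      exact one_le_pow₀ hB1
    · exact le_trans hb3 (by simpa using pow_le_pow_right₀ hB1 (by norm_num : 1 ≤ 3 * (3-1)))
    · exact le_trans hb4 (by simpa using pow_le_pow_right₀ hB1 (by norm_num : 1 ≤ 4 * (4-1)))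
    · exact le_trans hb5 (by simpa using pow_le_pow_right₀ hB1 (by norm_num : 1 ≤ 5 * (5-1)))
    · exact le_trans hb6 (by simpa using pow_le_pow_right₀ hB1 (by norm_num : 1 ≤ 6 * (6-1)))
  · push_neg at hn7
    rcases Nat.even_or_odd n with ⟨k, hk⟩ | ⟨k, hk⟩
    · -- even case : n = 2 * (m + 3), m ≥ 1
      obtain ⟨m, hm1, hn⟩ : ∃ m, 1 ≤ m ∧ n = 2 * (m + 3) := ⟨k - 3, by omega, by omega⟩
      have d1 : m + 1 - 1 = m := by omega
      have d2 : m + 2 - 1 = m + 1 := by omega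
      have d3 : m + 3 - 1 = m + 2 := by omega
      have d4 : m + 4 - 1 = m + 3 := by omega
      have d5 : m + 5 - 1 = m + 4 := by omega
      have h1 := ih (m + 1) (by omega); rw [d1] at h1
      have h2 := ih (m + 2) (by omega); rw [d2] at h2
      have h3 := ih (m + 3) (by omega); rw [d3] at h3
      have h4 := ih (m + 4) (by omega); rw [d4] at h4
      have h5 := ih (m + 5) (by omega); rw [d5] at h5
      rw [hn, W.preΨ'_even m]
      have e1 := Npoly_bound3 2 1 1 h2 h3 h5
      rw [pow_collapse] at e1
      simp only [pow_one] at e1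
      have e2 := Npoly_bound3 1 1 2 h1 h3 h4
      rw [pow_collapse] at e2
      simp only [pow_one] at e2
      have hE1 : (m+2)*(m+1)*2 + (m+3)*(m+2)*1 + (m+5)*(m+4)*1 = 4*(m*m) + 20*m + 30 := by
        ring
      have hE2 : (m+1)*m*1 + (m+3)*(m+2)*1 + (m+4)*(m+3)*2 = 4*(m*m) + 20*m + 30 := by
        ring
      have hT : (2*(m+3)) * ((2*(m+3)) - 1) = 4*(m*m) + 22*m + 30 := by
        rw [show (2*(m+3)) - 1 = 2*m + 5 by omega]; ring
      rw [hE1] at e1; rw [hE2] at e2; rw [hT]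
      calc Npoly _ ≤ _ + _ := Npoly_sub_le _ _
        _ ≤ B ^ (4*(m*m) + 20*m + 30) + B ^ (4*(m*m) + 20*m + 30) := add_le_add e1 e2
        _ = 2 * B ^ (4*(m*m) + 20*m + 30) := by ring
        _ ≤ B * B ^ (4*(m*m) + 20*m + 30) :=
            mul_le_mul_of_nonneg_right hB2 (pow_nonneg hB0 _)
        _ = B ^ (4*(m*m) + 20*m + 30 + 1) := by rw [pow_succ]; ring
        _ ≤ B ^ (4*(m*m) + 22*m + 30) := pow_le_pow_right₀ hB1 (by omega)
    · -- odd case : n = 2 * (m + 2) + 1, m ≥ 1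
      obtain ⟨m, hm1, hn⟩ : ∃ m, 1 ≤ m ∧ n = 2 * (m + 2) + 1 := ⟨k - 2, by omega, by omega⟩
      have d1 : m + 1 - 1 = m := by omega
      have d2 : m + 2 - 1 = m + 1 := by omega
      have d3 : m + 3 - 1 = m + 2 := by omega
      have d4 : m + 4 - 1 = m + 3 := by omega
      have h1 := ih (m + 1) (by omega); rw [d1] at h1
      have h2 := ih (m + 2) (by omega); rw [d2] at h2
      have h3 := ih (m + 3) (by omega); rw [d3] at h3
      have h4 := ih (m + 4) (by omega); rw [d4] at h4
      rw [hn, W.preΨ'_odd m]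
      have e1 := Npoly_bound3 1 3 1 h4 h2 (hite1 m)
      rw [show ((if Even m then W.Ψ₂Sq ^ 2 else 1) : ℚ[X]) ^ 1 =
        (if Even m then W.Ψ₂Sq ^ 2 else 1) from pow_one _] at e1
      rw [pow_collapse] at e1
      simp only [pow_one] at e1
      have e2 := Npoly_bound3 1 3 1 h1 h3 (hite2 m)
      rw [show ((if Even m then (1 : ℚ[X]) else W.Ψ₂Sq ^ 2) : ℚ[X]) ^ 1 =
        (if Even m then (1 : ℚ[X]) else W.Ψ₂Sq ^ 2) from pow_one _] at e2
      rw [pow_collapse] at e2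
      simp only [pow_one] at e2
      have hE1 : (m+4)*(m+3)*1 + (m+2)*(m+1)*3 + 1*1 = 4*(m*m) + 16*m + 19 := by ring
      have hE2 : (m+1)*m*1 + (m+3)*(m+2)*3 + 1*1 = 4*(m*m) + 16*m + 19 := by ring
      have hT : (2*(m+2)+1) * ((2*(m+2)+1) - 1) = 4*(m*m) + 18*m + 20 := by
        rw [show (2*(m+2)+1) - 1 = 2*(m+2) by omega]; ring
      rw [hE1] at e1; rw [hE2] at e2; rw [hT]
      calc Npoly _ ≤ _ + _ := Npoly_sub_le _ _
        _ ≤ B ^ (4*(m*m) + 16*m + 19) + B ^ (4*(m*m) + 16*m + 19) := add_le_add e1 e2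
        _ = 2 * B ^ (4*(m*m) + 16*m + 19) := by ring
        _ ≤ B * B ^ (4*(m*m) + 16*m + 19) :=
            mul_le_mul_of_nonneg_right hB2 (pow_nonneg hB0 _)
        _ = B ^ (4*(m*m) + 16*m + 19 + 1) := by rw [pow_succ]; ring
        _ ≤ B ^ (4*(m*m) + 18*m + 20) := pow_le_pow_right₀ hB1 (by omega)

end AuxDivPolyHeight

theorem stmt_5 (a b : ℚ) (hΔ : 4 * a ^ 3 + 27 * b ^ 2 ≠ 0)
    (W : WeierstrassCurve ℚ) (hW : W = ⟨0, 0, 0, a, b⟩) :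
    ∃ c : ℝ, ∀ n : ℕ, 1 ≤ n → polyLogHeight (paperPsi W n) ≤ c * (n : ℝ) ^ 2 := by
  obtain ⟨B, hB2, hbound⟩ := key W
  have hB1 : (1 : ℚ) ≤ B := by linarith
  have hB1R : (1 : ℝ) ≤ (B : ℝ) := by exact_mod_cast hB1
  have hlogB : 0 ≤ Real.log (B : ℝ) := Real.log_nonneg hB1R
  refine ⟨Real.log (B : ℝ), fun n hn1 => ?_⟩
  have hNp : Npoly (paperPsi W n) ≤ B ^ (n * n) := by
    rw [paperPsi]; split_ifs
    · exact le_trans (hbound n)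
        (pow_le_pow_right₀ hB1 (Nat.mul_le_mul_left n (Nat.sub_le n 1)))
    · have hkey : n * (n - 1) + n = n * n := by
        obtain ⟨k, rfl⟩ : ∃ k, n = k + 1 := ⟨n - 1, by omega⟩
        rw [show k + 1 - 1 = k by omega]; ring
      calc Npoly (2 * W.preΨ' n) ≤ 2 * Npoly (W.preΨ' n) := Npoly_two_mul_le _
        _ ≤ B * B ^ (n * (n - 1)) :=
            mul_le_mul hB2 (hbound n) (Npoly_nonneg _) (by linarith)
        _ = B ^ (n * (n - 1) + 1) := by rw [pow_succ]; ring
        _ ≤ B ^ (n * n) := pow_le_pow_right₀ hB1 (by linarith [hkey, hn1])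
  set p := paperPsi W n with hp
  have hub : ∀ i : ℕ, |((p.coeff i : ℚ) : ℝ)| ≤ ((B : ℝ)) ^ (n * n) := by
    intro i
    have h1 : |((p.coeff i : ℚ) : ℝ)| = ((|p.coeff i| : ℚ) : ℝ) := by push_cast; ring
    rw [h1]
    have h2 : (|p.coeff i| : ℚ) ≤ (B ^ (n * n) : ℚ) :=
      le_trans (abs_coeff_le_Npoly p i) hNp
    calc ((|p.coeff i| : ℚ) : ℝ) ≤ ((B ^ (n * n) : ℚ) : ℝ) := by exact_mod_cast h2
      _ = (B : ℝ) ^ (n * n) := by push_cast; ring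
  set S := ⨆ i : ℕ, |((p.coeff i : ℚ) : ℝ)| with hS
  have hSle : S ≤ (B : ℝ) ^ (n * n) := ciSup_le hub
  have hbdd : BddAbove (Set.range fun i : ℕ => |((p.coeff i : ℚ) : ℝ)|) :=
    ⟨(B : ℝ) ^ (n * n), by rintro _ ⟨i, rfl⟩; exact hub i⟩
  have hS0 : 0 ≤ S := le_trans (abs_nonneg _) (le_ciSup hbdd 0)
  have hnn : ((n * n : ℕ) : ℝ) = (n : ℝ) ^ 2 := by push_cast; ring
  have hgoal : Real.log S ≤ Real.log (B : ℝ) * (n : ℝ) ^ 2 := by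
    rcases hS0.eq_or_lt with h | h
    · rw [← h, Real.log_zero]
      positivity
    · calc Real.log S ≤ Real.log ((B : ℝ) ^ (n * n)) := Real.log_le_log h hSle
        _ = ((n * n : ℕ) : ℝ) * Real.log (B : ℝ) := Real.log_pow _ _
        _ = Real.log (B : ℝ) * (n : ℝ) ^ 2 := by rw [hnn]; ring
  rw [polyLogHeight]
  exact max_le (by positivity) hgoal
end

section
/- Let E be an elliptic curve Y² = X³ + aX + b over ℚ and define φ_n = X·ψ_n² − ψ_{n+1}ψ_{n−1} (reduced by the curve equation), which lies in ℤ[a,b,X]. There exists an effectively computable constant c depending only on E such that h(φ_n) ≤ c·n² for all integers n ≥ 1. -/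
open Polynomial

open Finset

noncomputable def nu (f : Polynomial ℚ) : ℝ :=
  ∑ i ∈ Finset.range (f.natDegree + 1), |((f.coeff i : ℚ) : ℝ)|

lemma nu_nonneg (f : Polynomial ℚ) : 0 ≤ nu f :=
  Finset.sum_nonneg fun _ _ => abs_nonneg _

lemma nu_eq (f : Polynomial ℚ) {N : ℕ} (h : f.natDegree < N) :
    nu f = ∑ i ∈ Finset.range N, |((f.coeff i : ℚ) : ℝ)| := by
  apply Finset.sum_subset (Finset.range_subset_range.2 h)
  intro i hi hni
  have : f.natDegree < i := by
    simp only [Finset.mem_range, not_lt] at hni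
    omega
  simp [Polynomial.coeff_eq_zero_of_natDegree_lt this]

lemma coeff_abs_le_nu (f : Polynomial ℚ) (i : ℕ) : |((f.coeff i : ℚ) : ℝ)| ≤ nu f := by
  by_cases h : i ≤ f.natDegree
  · exact Finset.single_le_sum (f := fun j => |((f.coeff j : ℚ) : ℝ)|)
      (fun j _ => abs_nonneg _) (Finset.mem_range.2 (Nat.lt_succ_of_le h))
  · rw [Polynomial.coeff_eq_zero_of_natDegree_lt (by omega)]
    simpa using nu_nonneg f

lemma nu_zero : nu (0 : Polynomial ℚ) = 0 := by simp [nu]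

lemma nu_one : nu (1 : Polynomial ℚ) = 1 := by simp [nu]

lemma nu_X : nu (X : Polynomial ℚ) = 1 := by
  simp [nu, Polynomial.natDegree_X, Finset.sum_range_succ, Polynomial.coeff_X]

lemma nu_sub_le (f g : Polynomial ℚ) : nu (f - g) ≤ nu f + nu g := by
  set N := max (f - g).natDegree (max f.natDegree g.natDegree) + 1 with hN
  rw [nu_eq (f - g) (N := N) (by omega), nu_eq f (N := N) (by omega), nu_eq g (N := N) (by omega),
    ← Finset.sum_add_distrib]
  apply Finset.sum_le_sum
  intro i _
  rw [Polynomial.coeff_sub]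
  push_cast
  exact abs_sub _ _

lemma nu_mul_le (f g : Polynomial ℚ) : nu (f * g) ≤ nu f * nu g := by
  set N := f.natDegree + g.natDegree + 1 with hN
  have hfg : (f * g).natDegree < N := Nat.lt_succ_of_le (Polynomial.natDegree_mul_le)
  rw [nu_eq (f * g) hfg, nu_eq f (N := N) (by omega), nu_eq g (N := N) (by omega), Finset.sum_mul_sum]
  calc ∑ n ∈ Finset.range N, |(((f * g).coeff n : ℚ) : ℝ)|
      ≤ ∑ n ∈ Finset.range N, ∑ p ∈ Finset.HasAntidiagonal.antidiagonal n,
          |((f.coeff p.1 : ℚ) : ℝ)| * |((g.coeff p.2 : ℚ) : ℝ)| := by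
        apply Finset.sum_le_sum
        intro n _
        rw [Polynomial.coeff_mul]
        push_cast
        exact (Finset.abs_sum_le_sum_abs _ _).trans
          (le_of_eq (by simp [abs_mul]))
    _ = ∑ p ∈ (Finset.range N).biUnion Finset.HasAntidiagonal.antidiagonal,
          |((f.coeff p.1 : ℚ) : ℝ)| * |((g.coeff p.2 : ℚ) : ℝ)| := by
        rw [Finset.sum_biUnion]
        intro x _ y _ hxy
        simp only [Finset.disjoint_left]
        intro p hpx hpy
        rw [Finset.HasAntidiagonal.mem_antidiagonal] at hpx hpy
        exact hxy (hpx ▸ hpy.symm ▸ rfl)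
    _ ≤ ∑ i ∈ Finset.range N, ∑ j ∈ Finset.range N,
          |((f.coeff i : ℚ) : ℝ)| * |((g.coeff j : ℚ) : ℝ)| := by
        rw [← Finset.sum_product']
        apply Finset.sum_le_sum_of_subset_of_nonneg
        · intro p hp
          simp only [Finset.mem_biUnion, Finset.mem_range, Finset.HasAntidiagonal.mem_antidiagonal] at hp
          obtain ⟨n, hn, hpn⟩ := hp
          simp only [Finset.mem_product, Finset.mem_range]
          omega
        · intro p _ _
          positivity

lemma nu_pow_le (f : Polynomial ℚ) (k : ℕ) : nu (f ^ k) ≤ nu f ^ k := by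
  induction k with
  | zero => simp [nu_one]
  | succ k ih =>
    rw [pow_succ, pow_succ]
    exact (nu_mul_le _ _).trans (mul_le_mul_of_nonneg_right ih (nu_nonneg f))

section EDS

variable {K : ℝ}

lemma nu_mul_bound (hK : (1:ℝ) ≤ K) {x y : Polynomial ℚ} {A B : ℕ}
    (hx : nu x ≤ K ^ A) (hy : nu y ≤ K ^ B) : nu (x * y) ≤ K ^ (A + B) := by
  rw [pow_add]
  exact (nu_mul_le x y).trans
    (mul_le_mul hx hy (nu_nonneg y) (pow_nonneg (by linarith) A))

lemma nu_pow_bound (hK : (1:ℝ) ≤ K) {y : Polynomial ℚ} {B k : ℕ}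
    (hy : nu y ≤ K ^ B) : nu (y ^ k) ≤ K ^ (B * k) := by
  rw [pow_mul]
  exact (nu_pow_le y k).trans (pow_le_pow_left₀ (nu_nonneg y) hy k)

lemma nu_sub_bound (hK : (2:ℝ) ≤ K) {x y : Polynomial ℚ} {A B E : ℕ}
    (hx : nu x ≤ K ^ A) (hy : nu y ≤ K ^ B) (hA : A + 1 ≤ E) (hB : B + 1 ≤ E) :
    nu (x - y) ≤ K ^ E := by
  have hK1 : (1:ℝ) ≤ K := by linarith
  have h1 : K ^ A ≤ K ^ (E - 1) := pow_le_pow_right₀ hK1 (by omega)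
  have h2 : K ^ B ≤ K ^ (E - 1) := pow_le_pow_right₀ hK1 (by omega)
  calc nu (x - y) ≤ nu x + nu y := nu_sub_le x y
    _ ≤ K ^ (E - 1) + K ^ (E - 1) := by linarith
    _ = 2 * K ^ (E - 1) := by ring
    _ ≤ K * K ^ (E - 1) := by
        have := pow_nonneg (by linarith : (0:ℝ) ≤ K) (E - 1)
        nlinarith
    _ = K ^ E := by
        rw [← pow_succ']
        congr 1
        omega

lemma nu_preNormEDS' (b c d : Polynomial ℚ) (hK : (2:ℝ) ≤ K)
    (hb : nu b ≤ K) (hc : nu c ≤ K ^ 6) (hd : nu d ≤ K ^ 13) (n : ℕ) :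
    nu (preNormEDS' b c d n) ≤ K ^ (n ^ 2 - 3) := by
  have hK1 : (1:ℝ) ≤ K := by linarith
  have hb' : nu b ≤ K ^ 1 := by rwa [pow_one]
  have hite : ∀ p : Prop, ∀ _ : Decidable p, nu (if p then b else 1) ≤ K ^ 1 := by
    intro p hp
    split
    · rwa [pow_one]
    · rw [nu_one, pow_one]; linarith
  induction n using Nat.strong_induction_on with
  | _ n ih =>
    match n with
    | 0 => simpa [nu_zero] using (by linarith : (0:ℝ) ≤ 1)
    | 1 => simp [nu_one]
    | 2 => simp only [preNormEDS'_two, nu_one]; calc (1:ℝ) ≤ K := hK1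
                                                    _ = K ^ (2 ^ 2 - 3) := (pow_one K).symm
    | 3 => simpa using hc
    | 4 => simpa using hd
    | (n + 5) =>
      rcases Nat.even_or_odd n with ⟨m, hm⟩ | ⟨m, hm⟩
      · -- n even : n + 5 = 2 * (m + 2) + 1
        have h5 : n + 5 = 2 * (m + 2) + 1 := by omega
        rw [h5, preNormEDS'_odd]
        have h1 := ih (m + 4) (by omega)
        have h2 := ih (m + 2) (by omega)
        have h3 := ih (m + 1) (by omega)
        have h4 := ih (m + 3) (by omega)
        have t1 : nu (preNormEDS' b c d (m + 4) * preNormEDS' b c d (m + 2) ^ 3 *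
            (if Even m then b else 1)) ≤
            K ^ (((m + 4) ^ 2 - 3) + ((m + 2) ^ 2 - 3) * 3 + 1) :=
          nu_mul_bound hK1 (nu_mul_bound hK1 h1 (nu_pow_bound hK1 h2)) (hite _ _)
        have t2 : nu (preNormEDS' b c d (m + 1) * preNormEDS' b c d (m + 3) ^ 3 *
            (if Even m then 1 else b)) ≤
            K ^ (((m + 1) ^ 2 - 3) + ((m + 3) ^ 2 - 3) * 3 + 1) := by
          refine nu_mul_bound hK1 (nu_mul_bound hK1 h3 (nu_pow_bound hK1 h4)) ?_
          split
          · rw [nu_one, pow_one]; linarith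
          · rwa [pow_one]
        refine nu_sub_bound hK t1 t2 ?_ ?_ <;>
        · obtain ⟨s, hs⟩ : ∃ s, s = m * m := ⟨_, rfl⟩
          simp only [show (m + 4) ^ 2 = s + 8 * m + 16 by rw [hs]; ring,
            show (m + 2) ^ 2 = s + 4 * m + 4 by rw [hs]; ring,
            show (m + 1) ^ 2 = s + 2 * m + 1 by rw [hs]; ring,
            show (m + 3) ^ 2 = s + 6 * m + 9 by rw [hs]; ring,
            show (2 * (m + 2) + 1) ^ 2 = 4 * s + 20 * m + 25 by rw [hs]; ring]
          omega
      · -- n odd : n + 5 = 2 * (m + 3)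
        have h5 : n + 5 = 2 * (m + 3) := by omega
        rw [h5, preNormEDS'_even]
        have h1 := ih (m + 2) (by omega)
        have h2 := ih (m + 3) (by omega)
        have h3 := ih (m + 5) (by omega)
        have h4 := ih (m + 1) (by omega)
        have h6 := ih (m + 4) (by omega)
        have t1 : nu (preNormEDS' b c d (m + 2) ^ 2 * preNormEDS' b c d (m + 3) *
            preNormEDS' b c d (m + 5)) ≤
            K ^ ((((m + 2) ^ 2 - 3) * 2 + ((m + 3) ^ 2 - 3)) + ((m + 5) ^ 2 - 3)) :=
          nu_mul_bound hK1 (nu_mul_bound hK1 (nu_pow_bound hK1 h1) h2) h3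
        have t2 : nu (preNormEDS' b c d (m + 1) * preNormEDS' b c d (m + 3) *
            preNormEDS' b c d (m + 4) ^ 2) ≤
            K ^ ((((m + 1) ^ 2 - 3) + ((m + 3) ^ 2 - 3)) + ((m + 4) ^ 2 - 3) * 2) :=
          nu_mul_bound hK1 (nu_mul_bound hK1 h4 h2) (nu_pow_bound hK1 h6)
        refine nu_sub_bound hK t1 t2 ?_ ?_ <;>
        · obtain ⟨s, hs⟩ : ∃ s, s = m * m := ⟨_, rfl⟩
          simp only [show (m + 2) ^ 2 = s + 4 * m + 4 by rw [hs]; ring,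
            show (m + 3) ^ 2 = s + 6 * m + 9 by rw [hs]; ring,
            show (m + 5) ^ 2 = s + 10 * m + 25 by rw [hs]; ring,
            show (m + 1) ^ 2 = s + 2 * m + 1 by rw [hs]; ring,
            show (m + 4) ^ 2 = s + 8 * m + 16 by rw [hs]; ring,
            show (2 * (m + 3)) ^ 2 = 4 * s + 24 * m + 36 by rw [hs]; ring]
          omega

end EDS


/-- For the elliptic curve `Y² = X³ + aX + b` over `ℚ`, the polynomials
`φₙ = X·ψₙ² − ψₙ₊₁ψₙ₋₁` (reduced by the curve equation, i.e. Mathlib's univariate `Φₙ`)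
have logarithmic height at most `c·n²`. -/
theorem stmt_6 (a b : ℚ) (hΔ : 4 * a ^ 3 + 27 * b ^ 2 ≠ 0)
    (W : WeierstrassCurve ℚ) (hW : W = ⟨0, 0, 0, a, b⟩) :
    ∃ c : ℝ, ∀ n : ℕ, 1 ≤ n → polyLogHeight (W.Φ (n : ℤ)) ≤ c * (n : ℝ) ^ 2 := by
  clear hΔ hW
  set K : ℝ := max 2 (max (nu (W.Ψ₂Sq ^ 2)) (max (nu W.Ψ₃) (max (nu W.preΨ₄) (nu W.Ψ₂Sq))))
    with hKdef
  have hK2 : (2:ℝ) ≤ K := le_max_left _ _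
  have hK1 : (1:ℝ) ≤ K := by linarith
  have hΨ2 : nu W.Ψ₂Sq ≤ K ^ 1 := by
    rw [pow_one]
    exact le_max_of_le_right (le_max_of_le_right (le_max_of_le_right (le_max_right _ _)))
  have hP : ∀ j : ℕ, nu (W.preΨ' j) ≤ K ^ (j ^ 2) := by
    intro j
    have h0 : nu (W.preΨ' j) ≤ K ^ (j ^ 2 - 3) := by
      refine nu_preNormEDS' _ _ _ hK2 ?_ ?_ ?_ j
      · exact le_max_of_le_right (le_max_left _ _)
      · exact le_trans (le_max_of_le_right (le_max_of_le_right (le_max_left _ _)))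
          (by calc K = K ^ 1 := (pow_one K).symm
                _ ≤ K ^ 6 := pow_le_pow_right₀ hK1 (by omega))
      · exact le_trans
          (le_max_of_le_right (le_max_of_le_right (le_max_of_le_right (le_max_left _ _))))
          (by calc K = K ^ 1 := (pow_one K).symm
                _ ≤ K ^ 13 := pow_le_pow_right₀ hK1 (by omega))
    exact h0.trans (pow_le_pow_right₀ hK1 (by omega))
  have hΦ : ∀ k : ℕ, nu (W.Φ (((k + 1 : ℕ) : ℤ))) ≤ K ^ (6 * (k + 1) ^ 2) := by
    intro k
    rw [Nat.cast_add, Nat.cast_one, WeierstrassCurve.Φ_ofNat]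
    have t1 : nu (X * W.preΨ' (k + 1) ^ 2 * (if Even k then 1 else W.Ψ₂Sq)) ≤
        K ^ ((0 + (k + 1) ^ 2 * 2) + 1) := by
      refine nu_mul_bound hK1 (nu_mul_bound hK1 ?_ (nu_pow_bound hK1 (hP (k + 1)))) ?_
      · rw [nu_X, pow_zero]
      · split
        · rw [nu_one, pow_one]; linarith
        · exact hΨ2
    have t2 : nu (W.preΨ' (k + 2) * W.preΨ' k * (if Even k then W.Ψ₂Sq else 1)) ≤
        K ^ (((k + 2) ^ 2 + k ^ 2) + 1) := by
      refine nu_mul_bound hK1 (nu_mul_bound hK1 (hP (k + 2)) (hP k)) ?_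
      split
      · exact hΨ2
      · rw [nu_one, pow_one]; linarith
    refine nu_sub_bound hK2 t1 t2 ?_ ?_ <;>
    · obtain ⟨s, hs⟩ : ∃ s, s = k * k := ⟨_, rfl⟩
      simp only [show (k + 1) ^ 2 = s + 2 * k + 1 by rw [hs]; ring,
        show (k + 2) ^ 2 = s + 4 * k + 4 by rw [hs]; ring,
        show k ^ 2 = s by rw [hs]; ring]
      omega
  refine ⟨6 * Real.log K, fun n hn => ?_⟩
  obtain ⟨k, rfl⟩ : ∃ k, n = k + 1 := ⟨n - 1, by omega⟩
  set f := W.Φ (((k + 1 : ℕ) : ℤ)) with hf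
  have hnu : nu f ≤ K ^ (6 * (k + 1) ^ 2) := hΦ k
  have hbdd : BddAbove (Set.range fun i : ℕ => |((f.coeff i : ℚ) : ℝ)|) :=
    ⟨nu f, by rintro x ⟨i, rfl⟩; exact coeff_abs_le_nu f i⟩
  set S := ⨆ i : ℕ, |((f.coeff i : ℚ) : ℝ)| with hS
  have hS0 : 0 ≤ S := le_trans (abs_nonneg _) (le_ciSup hbdd 0)
  have hSle : S ≤ K ^ (6 * (k + 1) ^ 2) :=
    ciSup_le fun i => (coeff_abs_le_nu f i).trans hnu
  have hlogK : 0 ≤ Real.log K := Real.log_nonneg hK1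
  have hmain : Real.log S ≤ 6 * Real.log K * ((k + 1 : ℕ) : ℝ) ^ 2 := by
    have hlog2 : Real.log (K ^ (6 * (k + 1) ^ 2)) =
        6 * Real.log K * ((k + 1 : ℕ) : ℝ) ^ 2 := by
      rw [Real.log_pow]
      push_cast
      ring
    rcases eq_or_lt_of_le hS0 with h | h
    · rw [← h, Real.log_zero, ← hlog2]
      exact Real.log_nonneg (one_le_pow₀ hK1)
    · rw [← hlog2]
      exact Real.log_le_log h hSle
  have hpos : (0:ℝ) ≤ 6 * Real.log K * ((k + 1 : ℕ) : ℝ) ^ 2 := by positivity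
  exact max_le hpos hmain
end

section
/- Let E be an elliptic curve Y² = X³ + aX + b over a field 𝕂 of characteristic ≠ 2, 3. The third summation polynomial σ_3(X_1,X_2,X_3) = (X_1−X_2)²X_3² − 2((X_1+X_2)(X_1X_2+a)+2b)X_3 + (X_1X_2−a)² − 4b(X_1+X_2) has the property: for x_1, x_2, x_3 in the algebraic closure of 𝕂, σ_3(x_1,x_2,x_3) = 0 if and only if there exist y_1, y_2, y_3 in the algebraic closure such that (x_i, y_i) ∈ E for i = 1,2,3 and (x_1,y_1)+(x_2,y_2)+(x_3,y_3) = O on E. -/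
open WeierstrassCurve

open Classical in
/-- The third summation polynomial property: over the algebraic closure of a field `𝕂` of
characteristic different from `2` and `3`, `σ₃(x₁,x₂,x₃) = 0` iff there are `y₁, y₂, y₃`
with `(xᵢ, yᵢ)` on the curve `E : Y² = X³ + aX + b` summing to the point at infinity. -/
theorem stmt_8 (K : Type*) [Field K] (hchar2 : (2 : K) ≠ 0) (hchar3 : (3 : K) ≠ 0)
    (a b : K) (hΔ : 4 * a ^ 3 + 27 * b ^ 2 ≠ 0)
    (W : WeierstrassCurve.Affine (AlgebraicClosure K))
    (hW : W = ⟨0, 0, 0, algebraMap K (AlgebraicClosure K) a, algebraMap K (AlgebraicClosure K) b⟩)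
    (x₁ x₂ x₃ : AlgebraicClosure K) :
    ((x₁ - x₂) ^ 2 * x₃ ^ 2
        - 2 * ((x₁ + x₂) * (x₁ * x₂ + algebraMap K (AlgebraicClosure K) a)
            + 2 * algebraMap K (AlgebraicClosure K) b) * x₃
        + (x₁ * x₂ - algebraMap K (AlgebraicClosure K) a) ^ 2
        - 4 * algebraMap K (AlgebraicClosure K) b * (x₁ + x₂) = 0) ↔
      ∃ (y₁ y₂ y₃ : AlgebraicClosure K) (h₁ : W.Nonsingular x₁ y₁)
        (h₂ : W.Nonsingular x₂ y₂) (h₃ : W.Nonsingular x₃ y₃),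
        WeierstrassCurve.Affine.Point.some _ _ h₁ + WeierstrassCurve.Affine.Point.some _ _ h₂ +
          WeierstrassCurve.Affine.Point.some _ _ h₃ = 0 := by
  set A := algebraMap K (AlgebraicClosure K) a with hA
  set B := algebraMap K (AlgebraicClosure K) b with hB
  have ha₁ : W.a₁ = 0 := by rw [hW]
  have ha₂ : W.a₂ = 0 := by rw [hW]
  have ha₃ : W.a₃ = 0 := by rw [hW]
  have ha₄ : W.a₄ = A := by rw [hW]
  have ha₆ : W.a₆ = B := by rw [hW]
  have h2 : (2 : AlgebraicClosure K) ≠ 0 := by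
    intro h
    exact hchar2 ((algebraMap K (AlgebraicClosure K)).injective (by rw [map_ofNat, h, map_zero]))
  have hD : 4 * A ^ 3 + 27 * B ^ 2 ≠ 0 := by
    intro h
    apply hΔ
    apply (algebraMap K (AlgebraicClosure K)).injective
    rw [map_zero, map_add, map_mul, map_mul, map_pow, map_pow, map_ofNat, map_ofNat, ← hA, ← hB, h]
  have hΔW : W.Δ ≠ 0 := by
    have h16 : W.Δ = -16 * (4 * A ^ 3 + 27 * B ^ 2) := by
      rw [WeierstrassCurve.Δ, b₂, b₄, b₆, b₈, ha₁, ha₂, ha₃, ha₄, ha₆]; ring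
    rw [h16]
    refine mul_ne_zero ?_ hD
    intro h
    apply h2
    have h16' : (-16 : AlgebraicClosure K) = -(2 ^ 4) := by norm_num
    rw [h16', neg_eq_zero] at h
    exact pow_eq_zero_iff (by norm_num) |>.mp h
  have hnegY : ∀ x y : AlgebraicClosure K, W.negY x y = -y := fun x y => by
    rw [Affine.negY, ha₁, ha₃]; ring
  have hEq : ∀ x y : AlgebraicClosure K, W.Equation x y ↔ y ^ 2 = x ^ 3 + A * x + B := fun x y => by
    rw [Affine.equation_iff, ha₁, ha₂, ha₃, ha₄, ha₆]
    constructor <;> intro h <;> linear_combination h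
  have hNS : ∀ x y : AlgebraicClosure K, y ^ 2 = x ^ 3 + A * x + B → W.Nonsingular x y :=
    fun x y h => (W.equation_iff_nonsingular_of_Δ_ne_zero hΔW).mp ((hEq x y).mpr h)
  have hsqrt : ∀ c : AlgebraicClosure K, ∃ y : AlgebraicClosure K, y ^ 2 = c := fun c =>
    IsAlgClosed.exists_pow_nat_eq c two_pos
  constructor
  · intro hσ
    by_cases hx : x₁ = x₂
    · subst hx
      by_cases hf : x₁ ^ 3 + A * x₁ + B = 0
      · exfalso
        have h3 : (3 * x₁ ^ 2 + A) ^ 2 = 0 := by linear_combination hσ + (8 * x₁ + 4 * x₃) * hf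
        have h3' : 3 * x₁ ^ 2 + A = 0 := pow_eq_zero_iff two_ne_zero |>.mp h3
        apply hD
        have hA' : A = -3 * x₁ ^ 2 := by linear_combination h3'
        have hB' : B = 2 * x₁ ^ 3 := by linear_combination hf - x₁ * h3'
        rw [hA', hB']; ring
      · obtain ⟨y₁, hy₁⟩ := hsqrt (x₁ ^ 3 + A * x₁ + B)
        have hy₁0 : y₁ ≠ 0 := fun h => hf (by rw [← hy₁, h]; ring)
        have h₁ : W.Nonsingular x₁ y₁ := hNS _ _ hy₁
        have hy : y₁ ≠ W.negY x₁ y₁ := by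
          rw [hnegY]
          intro h
          apply hy₁0
          have h2y : (2 : AlgebraicClosure K) * y₁ = 0 := by linear_combination h
          exact (mul_eq_zero.mp h2y).resolve_left h2
        have hxy : ¬(x₁ = x₁ ∧ y₁ = W.negY x₁ y₁) := fun h => hy h.2
        have h2y : 2 * y₁ ≠ 0 := mul_ne_zero h2 hy₁0
        have hs : W.slope x₁ x₁ y₁ y₁ = (3 * x₁ ^ 2 + A) / (2 * y₁) := by
          rw [Affine.slope_of_Y_ne rfl hy, hnegY, ha₁, ha₂, ha₄]
          congr 1 <;> ring
        have hkey : 4 * y₁ ^ 2 * (x₃ + 2 * x₁) = (3 * x₁ ^ 2 + A) ^ 2 := by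
          linear_combination (4 * x₃ + 8 * x₁) * hy₁ - hσ
        have hx3 : x₃ = W.addX x₁ x₁ (W.slope x₁ x₁ y₁ y₁) := by
          rw [Affine.addX, hs, ha₁, ha₂]
          field_simp
          linear_combination hkey
        subst hx3
        refine ⟨y₁, y₁, W.negY _ (W.addY x₁ x₁ y₁ (W.slope x₁ x₁ y₁ y₁)), h₁, h₁,
          (Affine.nonsingular_neg _ _).mpr (Affine.nonsingular_add h₁ h₁ hxy), ?_⟩
        rw [Affine.Point.add_some hxy]
        exact add_neg_cancel (Affine.Point.some _ _ (Affine.nonsingular_add h₁ h₁ hxy))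
    · obtain ⟨y₁, hy₁⟩ := hsqrt (x₁ ^ 3 + A * x₁ + B)
      obtain ⟨y₂', hy₂'⟩ := hsqrt (x₂ ^ 3 + A * x₂ + B)
      have hcases : (2 * y₁ * y₂' - ((x₁ ^ 3 + A * x₁ + B) + (x₂ ^ 3 + A * x₂ + B)
            - (x₁ - x₂) ^ 2 * (x₁ + x₂ + x₃)))
          * (2 * y₁ * y₂' + ((x₁ ^ 3 + A * x₁ + B) + (x₂ ^ 3 + A * x₂ + B)
            - (x₁ - x₂) ^ 2 * (x₁ + x₂ + x₃))) = 0 := by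
        linear_combination 4 * y₂' ^ 2 * hy₁ + 4 * (x₁ ^ 3 + A * x₁ + B) * hy₂'
          - (x₁ - x₂) ^ 2 * hσ
      have main : ∃ y₂ : AlgebraicClosure K, y₂ ^ 2 = x₂ ^ 3 + A * x₂ + B ∧
          2 * y₁ * y₂ = (x₁ ^ 3 + A * x₁ + B) + (x₂ ^ 3 + A * x₂ + B)
            - (x₁ - x₂) ^ 2 * (x₁ + x₂ + x₃) := by
        rcases mul_eq_zero.mp hcases with h | h
        · exact ⟨y₂', hy₂', by linear_combination h⟩
        · exact ⟨-y₂', by rw [neg_pow]; simpa using hy₂', by linear_combination -h⟩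
      obtain ⟨y₂, hy₂, hyy⟩ := main
      have h₁ : W.Nonsingular x₁ y₁ := hNS _ _ hy₁
      have h₂ : W.Nonsingular x₂ y₂ := hNS _ _ hy₂
      have hxy : ¬(x₁ = x₂ ∧ y₁ = W.negY x₂ y₂) := fun h => hx h.1
      have hd : x₁ - x₂ ≠ 0 := sub_ne_zero.mpr hx
      have hkey : (y₁ - y₂) ^ 2 = (x₁ - x₂) ^ 2 * (x₁ + x₂ + x₃) := by
        linear_combination hy₁ + hy₂ - hyy
      have hx3 : x₃ = W.addX x₁ x₂ (W.slope x₁ x₂ y₁ y₂) := by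
        rw [Affine.addX, Affine.slope_of_X_ne hx, ha₁, ha₂]
        field_simp
        linear_combination -hkey
      subst hx3
      refine ⟨y₁, y₂, W.negY _ (W.addY x₁ x₂ y₁ (W.slope x₁ x₂ y₁ y₂)), h₁, h₂,
        (Affine.nonsingular_neg _ _).mpr (Affine.nonsingular_add h₁ h₂ hxy), ?_⟩
      rw [Affine.Point.add_some hxy]
      exact add_neg_cancel (Affine.Point.some _ _ (Affine.nonsingular_add h₁ h₂ hxy))
  · rintro ⟨y₁, y₂, y₃, h₁, h₂, h₃, hsum⟩
    have e₁ : y₁ ^ 2 = x₁ ^ 3 + A * x₁ + B := (hEq _ _).mp h₁.1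
    have e₂ : y₂ ^ 2 = x₂ ^ 3 + A * x₂ + B := (hEq _ _).mp h₂.1
    have hsum2 : Affine.Point.some _ _ h₁ + Affine.Point.some _ _ h₂ = -Affine.Point.some _ _ h₃ :=
      eq_neg_of_add_eq_zero_left hsum
    rw [Affine.Point.neg_some] at hsum2
    by_cases hx : x₁ = x₂
    · have hy : y₁ ≠ W.negY x₂ y₂ := by
        intro hy
        rw [Affine.Point.add_of_Y_eq hx hy] at hsum2
        exact Affine.Point.some_ne_zero _ hsum2.symm
      have hy₁0 : y₁ ≠ 0 := by
        intro h0
        apply hy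
        rw [hnegY]
        have hsq : y₂ ^ 2 = 0 := by rw [e₂, ← hx, ← e₁, h0]; ring
        rw [h0, pow_eq_zero_iff two_ne_zero |>.mp hsq, neg_zero]
      subst hx
      have h2y : 2 * y₁ ≠ 0 := mul_ne_zero h2 hy₁0
      have hs : W.slope x₁ x₁ y₁ y₂ = (3 * x₁ ^ 2 + A) / (2 * y₁) := by
        rw [Affine.slope_of_Y_ne rfl hy, hnegY, ha₁, ha₂, ha₄]
        congr 1 <;> ring
      rw [Affine.Point.add_some (fun h => hy h.2)] at hsum2
      injection hsum2 with hx3 hy3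
      rw [Affine.addX, hs, ha₁, ha₂] at hx3
      have hkey : 4 * y₁ ^ 2 * (x₃ + 2 * x₁) = (3 * x₁ ^ 2 + A) ^ 2 := by
        field_simp at hx3
        linear_combination -hx3
      linear_combination -hkey + (4 * x₃ + 8 * x₁) * e₁
    · rw [Affine.Point.add_of_X_ne hx] at hsum2
      injection hsum2 with hx3 hy3
      rw [Affine.addX, Affine.slope_of_X_ne hx, ha₁, ha₂] at hx3
      have hd : x₁ - x₂ ≠ 0 := sub_ne_zero.mpr hx
      have hkey : (y₁ - y₂) ^ 2 = (x₁ - x₂) ^ 2 * (x₁ + x₂ + x₃) := by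
        field_simp at hx3
        linear_combination hx3
      have hyy : 2 * y₁ * y₂ = (x₁ ^ 3 + A * x₁ + B) + (x₂ ^ 3 + A * x₂ + B)
          - (x₁ - x₂) ^ 2 * (x₁ + x₂ + x₃) := by
        linear_combination e₁ + e₂ - hkey
      have hsq := congrArg (· ^ 2) hyy
      have haux : (x₁ - x₂) ^ 2 * ((x₁ - x₂) ^ 2 * x₃ ^ 2
          - 2 * ((x₁ + x₂) * (x₁ * x₂ + A) + 2 * B) * x₃
          + (x₁ * x₂ - A) ^ 2 - 4 * B * (x₁ + x₂)) = 0 := by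
        linear_combination -hsq + 4 * y₂ ^ 2 * e₁ + 4 * (x₁ ^ 3 + A * x₁ + B) * e₂
      rcases mul_eq_zero.mp haux with h | h
      · exact absurd (pow_eq_zero_iff two_ne_zero |>.mp h) hd
      · exact h
end

section
/- Let E be an elliptic curve over ℚ given by a Weierstrass equation Y² = X³ + aX + b, and let σ_n (n ≥ 2) be the summation polynomials of E defined recursively via resultants: σ_n(X_1,…,X_n) = Res_X(σ_{n−k}(X_1,…,X_{n−k−1},X), σ_{k+2}(X_{n−k},…,X_n,X)). Then h(σ_n) = exp(O(n)), i.e., there is an effectively computable constant c depending only on E such that h(σ_n) ≤ exp(c·n) for all n ≥ 2. -/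
open Polynomial

/-- For `P` a polynomial in the variables `X_1, …, X_j` (indexed `0, …, j-1`),
`substLast j offset P` is the univariate polynomial (in the resultant variable `X`) obtained
by substituting the last variable `X_j ↦ X` and renaming the remaining variables
`X_i ↦ X_{i + offset}`. -/
noncomputable def substLast (j offset : ℕ) (P : MvPolynomial ℕ ℚ) :
    Polynomial (MvPolynomial ℕ ℚ) :=
  MvPolynomial.aeval
    (fun i => if i = j - 1 then Polynomial.X else Polynomial.C (MvPolynomial.X (i + offset))) P

/-- The logarithmic height of a multivariate polynomial with rational coefficients. -/
noncomputable def hMv (P : MvPolynomial ℕ ℚ) : ℝ :=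
  max 0 (Real.log (⨆ m : (ℕ →₀ ℕ), |((P.coeff m : ℚ) : ℝ)|))

noncomputable def Snorm (P : MvPolynomial ℕ ℚ) : ℚ := ∑ m ∈ P.support, |P.coeff m|

lemma Snorm_nonneg (P : MvPolynomial ℕ ℚ) : 0 ≤ Snorm P :=
  Finset.sum_nonneg fun _ _ => abs_nonneg _

lemma Snorm_eq_sum {P : MvPolynomial ℕ ℚ} {s : Finset (ℕ →₀ ℕ)} (hs : P.support ⊆ s) :
    Snorm P = ∑ m ∈ s, |P.coeff m| :=
  Finset.sum_subset hs fun m _ hm => by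
    rw [MvPolynomial.notMem_support_iff.mp hm, abs_zero]

lemma abs_coeff_le_Snorm (P : MvPolynomial ℕ ℚ) (m : ℕ →₀ ℕ) : |P.coeff m| ≤ Snorm P := by
  by_cases h : m ∈ P.support
  · exact Finset.single_le_sum (f := fun m => |P.coeff m|) (fun _ _ => abs_nonneg _) h
  · rw [MvPolynomial.notMem_support_iff.mp h, abs_zero]; exact Snorm_nonneg P

lemma Snorm_zero : Snorm 0 = 0 := by simp [Snorm]

lemma Snorm_add_le (P Q : MvPolynomial ℕ ℚ) : Snorm (P + Q) ≤ Snorm P + Snorm Q := by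
  classical
  set s := P.support ∪ Q.support ∪ (P + Q).support with hsdef
  have h1 : Snorm (P + Q) = ∑ m ∈ s, |(P + Q).coeff m| :=
    Snorm_eq_sum (Finset.subset_union_right)
  have h2 : Snorm P = ∑ m ∈ s, |P.coeff m| :=
    Snorm_eq_sum (Finset.subset_union_left.trans Finset.subset_union_left)
  have h3 : Snorm Q = ∑ m ∈ s, |Q.coeff m| :=
    Snorm_eq_sum (Finset.subset_union_right.trans Finset.subset_union_left)
  rw [h1, h2, h3, ← Finset.sum_add_distrib]
  exact Finset.sum_le_sum fun m _ => by
    rw [MvPolynomial.coeff_add]; exact abs_add_le _ _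

lemma Snorm_neg (P : MvPolynomial ℕ ℚ) : Snorm (-P) = Snorm P := by
  simp [Snorm, MvPolynomial.support_neg]

lemma Snorm_sum_le {ι : Type*} (s : Finset ι) (F : ι → MvPolynomial ℕ ℚ) :
    Snorm (∑ i ∈ s, F i) ≤ ∑ i ∈ s, Snorm (F i) := by
  classical
  induction s using Finset.cons_induction with
  | empty => simp [Snorm_zero]
  | cons a s ha ih =>
    rw [Finset.sum_cons, Finset.sum_cons]
    exact (Snorm_add_le _ _).trans (add_le_add le_rfl ih)

open Finset in
lemma conv_bound {A : Type*} [AddCommMonoid A] [DecidableEq A] [Finset.HasAntidiagonal A]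
    (f g : A → ℚ) (sf sg sh : Finset A)
    (hf : ∀ u, u ∉ sf → f u = 0) (hg : ∀ v, v ∉ sg → g v = 0) :
    ∑ n ∈ sh, |∑ x ∈ Finset.HasAntidiagonal.antidiagonal n, f x.1 * g x.2| ≤
      (∑ u ∈ sf, |f u|) * (∑ v ∈ sg, |g v|) := by
  classical
  set T : A → Finset (A × A) :=
    fun n => (Finset.HasAntidiagonal.antidiagonal n).filter (fun x => x.1 ∈ sf ∧ x.2 ∈ sg) with hT
  have key : ∀ n ∈ sh, |∑ x ∈ Finset.HasAntidiagonal.antidiagonal n, f x.1 * g x.2| ≤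
      ∑ x ∈ T n, |f x.1| * |g x.2| := by
    intro n _
    calc |∑ x ∈ Finset.HasAntidiagonal.antidiagonal n, f x.1 * g x.2|
        ≤ ∑ x ∈ Finset.HasAntidiagonal.antidiagonal n, |f x.1 * g x.2| :=
          Finset.abs_sum_le_sum_abs _ _
      _ = ∑ x ∈ T n, |f x.1 * g x.2| := by
          refine (Finset.sum_filter_of_ne ?_).symm
          intro x hx hne
          constructor
          · by_contra hc; exact hne (by rw [hf _ hc, zero_mul, abs_zero])
          · by_contra hc; exact hne (by rw [hg _ hc, mul_zero, abs_zero])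
      _ = ∑ x ∈ T n, |f x.1| * |g x.2| := by
          exact Finset.sum_congr rfl fun x _ => abs_mul _ _
  have hdisj : (sh : Set A).PairwiseDisjoint T := by
    intro n₁ _ n₂ _ hne
    refine Finset.disjoint_left.mpr fun x hx1 hx2 => ?_
    have e1 : x.1 + x.2 = n₁ := Finset.HasAntidiagonal.mem_antidiagonal.mp (Finset.mem_filter.mp hx1).1
    have e2 : x.1 + x.2 = n₂ := Finset.HasAntidiagonal.mem_antidiagonal.mp (Finset.mem_filter.mp hx2).1
    exact hne (e1 ▸ e2)
  calc ∑ n ∈ sh, |∑ x ∈ Finset.HasAntidiagonal.antidiagonal n, f x.1 * g x.2|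
      ≤ ∑ n ∈ sh, ∑ x ∈ T n, |f x.1| * |g x.2| := Finset.sum_le_sum key
    _ = ∑ x ∈ sh.biUnion T, |f x.1| * |g x.2| := (Finset.sum_biUnion hdisj).symm
    _ ≤ ∑ x ∈ sf ×ˢ sg, |f x.1| * |g x.2| := by
        refine Finset.sum_le_sum_of_subset_of_nonneg ?_ fun _ _ _ =>
          mul_nonneg (abs_nonneg _) (abs_nonneg _)
        intro x hx
        obtain ⟨n, _, hxn⟩ := Finset.mem_biUnion.mp hx
        obtain ⟨_, h1, h2⟩ := Finset.mem_filter.mp hxn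
        exact Finset.mem_product.mpr ⟨h1, h2⟩
    _ = (∑ u ∈ sf, |f u|) * (∑ v ∈ sg, |g v|) := by
        rw [Finset.sum_mul_sum, Finset.sum_product]

lemma Snorm_mul_le (P Q : MvPolynomial ℕ ℚ) : Snorm (P * Q) ≤ Snorm P * Snorm Q := by
  classical
  have h : Snorm (P * Q) =
      ∑ n ∈ (P * Q).support, |∑ x ∈ Finset.HasAntidiagonal.antidiagonal n, P.coeff x.1 * Q.coeff x.2| := by
    exact Finset.sum_congr rfl fun n _ => by rw [MvPolynomial.coeff_mul]
  rw [h]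
  exact conv_bound _ _ _ _ _ (fun u hu => MvPolynomial.notMem_support_iff.mp hu)
    (fun v hv => MvPolynomial.notMem_support_iff.mp hv)

lemma Snorm_C (c : ℚ) : Snorm (MvPolynomial.C c) = |c| := by
  by_cases h : c = 0
  · simp [h, Snorm_zero]
  · have hsupp : (MvPolynomial.C c : MvPolynomial ℕ ℚ).support = {0} := by
      rw [MvPolynomial.C_apply, MvPolynomial.support_monomial]
      simp [h]
    rw [Snorm, hsupp]
    simp

lemma Snorm_one : Snorm 1 = 1 := by
  have : (1 : MvPolynomial ℕ ℚ) = MvPolynomial.C 1 := by simp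
  rw [this, Snorm_C]; norm_num

lemma Snorm_X (i : ℕ) : Snorm (MvPolynomial.X i) = 1 := by
  rw [Snorm, MvPolynomial.support_X]
  simp [MvPolynomial.coeff_X]

lemma Snorm_prod_le {ι : Type*} (s : Finset ι) (F : ι → MvPolynomial ℕ ℚ) :
    Snorm (∏ i ∈ s, F i) ≤ ∏ i ∈ s, Snorm (F i) := by
  classical
  induction s using Finset.cons_induction with
  | empty => simp [Snorm_one]
  | cons a s ha ih =>
    rw [Finset.prod_cons, Finset.prod_cons]
    exact (Snorm_mul_le _ _).trans
      (mul_le_mul_of_nonneg_left ih (Snorm_nonneg _))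

lemma Snorm_pow_le (P : MvPolynomial ℕ ℚ) (k : ℕ) : Snorm (P ^ k) ≤ Snorm P ^ k := by
  induction k with
  | zero => simp [Snorm_one]
  | succ k ih =>
    rw [pow_succ, pow_succ]
    exact (Snorm_mul_le _ _).trans (mul_le_mul_of_nonneg_right ih (Snorm_nonneg _) |>.trans
      (le_of_eq rfl))

lemma Snorm_units_smul (u : ℤˣ) (P : MvPolynomial ℕ ℚ) : Snorm (u • P) = Snorm P := by
  rcases Int.units_eq_one_or u with h | h <;> subst h
  · simp
  · have : ((-1 : ℤˣ) • P) = -P := by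
      rw [Units.smul_def]; simp
    rw [this, Snorm_neg]

-- degreeOf auxiliary lemmas
lemma degreeOf_sum_le_of {ι : Type*} (v : ℕ) (s : Finset ι) (F : ι → MvPolynomial ℕ ℚ) (B : ℕ)
    (h : ∀ i ∈ s, MvPolynomial.degreeOf v (F i) ≤ B) :
    MvPolynomial.degreeOf v (∑ i ∈ s, F i) ≤ B := by
  classical
  induction s using Finset.cons_induction with
  | empty => simp [MvPolynomial.degreeOf_zero]
  | cons a s ha ih =>
    rw [Finset.sum_cons]
    refine (MvPolynomial.degreeOf_add_le _ _ _).trans (max_le ?_ ?_)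
    · exact h a (Finset.mem_cons_self a s)
    · exact ih fun i hi => h i (Finset.mem_cons_of_mem hi)

lemma degreeOf_prod_le {ι : Type*} (v : ℕ) (s : Finset ι) (F : ι → MvPolynomial ℕ ℚ) :
    MvPolynomial.degreeOf v (∏ i ∈ s, F i) ≤ ∑ i ∈ s, MvPolynomial.degreeOf v (F i) := by
  classical
  induction s using Finset.cons_induction with
  | empty =>
    rw [Finset.prod_empty, Finset.sum_empty, show (1 : MvPolynomial ℕ ℚ) = MvPolynomial.C 1 from (map_one MvPolynomial.C).symm, MvPolynomial.degreeOf_C]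
  | cons a s ha ih =>
    rw [Finset.prod_cons, Finset.sum_cons]
    exact (MvPolynomial.degreeOf_mul_le _ _ _).trans (add_le_add le_rfl ih)

lemma degreeOf_neg (v : ℕ) (P : MvPolynomial ℕ ℚ) :
    MvPolynomial.degreeOf v (-P) = MvPolynomial.degreeOf v P := by
  simp [MvPolynomial.degreeOf_def, MvPolynomial.degrees_neg]

lemma degreeOf_units_smul (u : ℤˣ) (v : ℕ) (P : MvPolynomial ℕ ℚ) :
    MvPolynomial.degreeOf v (u • P) = MvPolynomial.degreeOf v P := by
  rcases Int.units_eq_one_or u with h | h <;> subst h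
  · simp
  · have : ((-1 : ℤˣ) • P) = -P := by rw [Units.smul_def]; simp
    rw [this, degreeOf_neg]

lemma substLast_eq (j offset : ℕ) (P : MvPolynomial ℕ ℚ) :
    substLast j offset P = ∑ m ∈ P.support,
      Polynomial.C (MvPolynomial.C (P.coeff m) *
        ∏ i ∈ m.support.filter (· ≠ j - 1), MvPolynomial.X (i + offset) ^ m i) *
      Polynomial.X ^ m (j - 1) := by
  classical
  set φ : ℕ → Polynomial (MvPolynomial ℕ ℚ) :=
    fun i => if i = j - 1 then Polynomial.X else Polynomial.C (MvPolynomial.X (i + offset))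
  have hsub : substLast j offset P = MvPolynomial.aeval φ P := rfl
  conv_lhs => rw [hsub, MvPolynomial.as_sum P, map_sum]
  refine Finset.sum_congr rfl fun m hm => ?_
  rw [MvPolynomial.aeval_monomial, Finsupp.prod,
    ← Finset.prod_filter_mul_prod_filter_not m.support (· = j - 1)]
  have h1 : ∏ i ∈ m.support.filter (· = j - 1), φ i ^ m i = Polynomial.X ^ m (j - 1) := by
    rw [Finset.filter_eq']
    split_ifs with h
    · rw [Finset.prod_singleton]
      simp only [φ, if_pos rfl]
    · rw [Finset.prod_empty, Finsupp.notMem_support_iff.mp h, pow_zero]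
  have h2 : ∏ i ∈ m.support.filter (fun i => ¬ i = j - 1), φ i ^ m i
      = Polynomial.C (∏ i ∈ m.support.filter (· ≠ j - 1), MvPolynomial.X (i + offset) ^ m i) := by
    rw [map_prod]
    refine Finset.prod_congr rfl fun i hi => ?_
    have hne : ¬ i = j - 1 := (Finset.mem_filter.mp hi).2
    rw [map_pow]
    simp only [φ, if_neg hne]
  rw [h1, h2]
  have h3 : (algebraMap ℚ (Polynomial (MvPolynomial ℕ ℚ))) (P.coeff m)
      = Polynomial.C (MvPolynomial.C (P.coeff m)) := by
    rw [Polynomial.algebraMap_apply, MvPolynomial.algebraMap_eq]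
  rw [h3, Polynomial.C_mul]
  ring

lemma substLast_natDegree_le (j offset : ℕ) (P : MvPolynomial ℕ ℚ) :
    (substLast j offset P).natDegree ≤ P.degreeOf (j - 1) := by
  rw [substLast_eq]
  refine Polynomial.natDegree_sum_le_of_forall_le _ _ fun m hm => ?_
  refine (Polynomial.natDegree_mul_le).trans ?_
  rw [Polynomial.natDegree_C, Polynomial.natDegree_X_pow, zero_add]
  rw [MvPolynomial.degreeOf_eq_sup]
  exact Finset.le_sup (f := fun m : ℕ →₀ ℕ => m (j - 1)) hm

lemma substLast_coeff (j offset : ℕ) (P : MvPolynomial ℕ ℚ) (e : ℕ) :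
    (substLast j offset P).coeff e = ∑ m ∈ P.support,
      if e = m (j - 1) then
        MvPolynomial.C (P.coeff m) *
          ∏ i ∈ m.support.filter (· ≠ j - 1), MvPolynomial.X (i + offset) ^ m i
      else 0 := by
  rw [substLast_eq, Polynomial.finset_sum_coeff]
  refine Finset.sum_congr rfl fun m hm => ?_
  rw [Polynomial.coeff_C_mul, Polynomial.coeff_X_pow, mul_ite, mul_one, mul_zero]

lemma substLast_coeff_Snorm_le (j offset : ℕ) (P : MvPolynomial ℕ ℚ) (e : ℕ) :
    Snorm ((substLast j offset P).coeff e) ≤ Snorm P := by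
  rw [substLast_coeff]
  refine (Snorm_sum_le _ _).trans ?_
  have hP : Snorm P = ∑ m ∈ P.support, |P.coeff m| := rfl
  rw [hP]
  refine Finset.sum_le_sum fun m hm => ?_
  split_ifs with he
  · refine (Snorm_mul_le _ _).trans ?_
    rw [Snorm_C]
    have h1 : Snorm (∏ i ∈ m.support.filter (· ≠ j - 1),
        MvPolynomial.X (i + offset) ^ m i) ≤ 1 := by
      refine (Snorm_prod_le _ _).trans ?_
      refine Finset.prod_le_one (fun i _ => Snorm_nonneg _) (fun i _ => ?_)
      refine (Snorm_pow_le _ _).trans ?_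
      rw [Snorm_X, one_pow]
    calc |P.coeff m| * Snorm (∏ i ∈ m.support.filter (· ≠ j - 1),
          MvPolynomial.X (i + offset) ^ m i)
        ≤ |P.coeff m| * 1 := mul_le_mul_of_nonneg_left h1 (abs_nonneg _)
      _ = |P.coeff m| := mul_one _
  · rw [Snorm_zero]
    exact abs_nonneg _

lemma substLast_coeff_degreeOf_le (j offset : ℕ) (P : MvPolynomial ℕ ℚ) (B : ℕ)
    (hB : ∀ u, P.degreeOf u ≤ B) (e v : ℕ) :
    MvPolynomial.degreeOf v ((substLast j offset P).coeff e) ≤ B := by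
  classical
  rw [substLast_coeff]
  refine degreeOf_sum_le_of v _ _ B fun m hm => ?_
  split_ifs with he
  · refine (MvPolynomial.degreeOf_mul_le _ _ _).trans ?_
    rw [MvPolynomial.degreeOf_C, zero_add]
    refine (degreeOf_prod_le v _ _).trans ?_
    calc ∑ i ∈ m.support.filter (· ≠ j - 1), MvPolynomial.degreeOf v (MvPolynomial.X (i + offset) ^ m i)
        ≤ ∑ i ∈ m.support.filter (· ≠ j - 1), (if i + offset = v then m i else 0) := by
          refine Finset.sum_le_sum fun i _ => ?_
          refine (MvPolynomial.degreeOf_pow_le _ _ _).trans ?_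
          rw [MvPolynomial.degreeOf_X]
          by_cases hiv : i + offset = v
          · rw [if_pos hiv.symm, if_pos hiv, mul_one]
          · rw [if_neg (fun hc => hiv hc.symm), if_neg hiv, mul_zero]
      _ ≤ B := by
          by_cases hvo : offset ≤ v
          · have hcong : ∀ i ∈ m.support.filter (· ≠ j - 1),
                (if i + offset = v then m i else 0) = (if i = v - offset then m i else 0) :=
              fun i _ => if_congr (by omega) rfl rfl
            rw [Finset.sum_congr rfl hcong, Finset.sum_ite_eq' _ (v - offset)]
            split_ifs with h
            · refine le_trans ?_ (hB (v - offset))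
              rw [MvPolynomial.degreeOf_eq_sup]
              exact Finset.le_sup (f := fun m : ℕ →₀ ℕ => m (v - offset)) hm
            · exact Nat.zero_le _
          · have hcong : ∀ i ∈ m.support.filter (· ≠ j - 1),
                (if i + offset = v then m i else 0) = 0 :=
              fun i _ => if_neg (by omega)
            rw [Finset.sum_congr rfl hcong, Finset.sum_const_zero]
            exact Nat.zero_le _
  · rw [MvPolynomial.degreeOf_zero]
    exact Nat.zero_le _

lemma resultant_Snorm_le (f g : Polynomial (MvPolynomial ℕ ℚ)) (Sf Sg : ℚ)
    (hSf0 : 0 ≤ Sf) (hSg0 : 0 ≤ Sg)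
    (hf : ∀ e, Snorm (f.coeff e) ≤ Sf) (hg : ∀ e, Snorm (g.coeff e) ≤ Sg) :
    Snorm (_root_.resultant f g) ≤
      (Nat.factorial (g.natDegree + f.natDegree) : ℚ) * Sf ^ g.natDegree * Sg ^ f.natDegree := by
  classical
  have hent : ∀ r c : Fin (g.natDegree + f.natDegree),
      Snorm (sylvesterMatrix f g r c) ≤ if (r : ℕ) < g.natDegree then Sf else Sg := by
    intro r c
    simp only [sylvesterMatrix]
    split_ifs with h1 h2 h3
    · exact hf _
    · rw [Snorm_zero]; exact hSf0
    · exact hg _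
    · rw [Snorm_zero]; exact hSg0
  rw [_root_.resultant, Matrix.det_apply]
  refine (Snorm_sum_le _ _).trans ?_
  have hterm : ∀ π : Equiv.Perm (Fin (g.natDegree + f.natDegree)),
      Snorm (Equiv.Perm.sign π • ∏ i, sylvesterMatrix f g (π i) i) ≤
        Sf ^ g.natDegree * Sg ^ f.natDegree := by
    intro π
    rw [Snorm_units_smul]
    refine (Snorm_prod_le _ _).trans ?_
    calc ∏ i, Snorm (sylvesterMatrix f g (π i) i)
        ≤ ∏ i : Fin (g.natDegree + f.natDegree),
            (if ((π i : Fin _) : ℕ) < g.natDegree then Sf else Sg) :=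
          Finset.prod_le_prod (fun _ _ => Snorm_nonneg _) (fun i _ => hent _ _)
      _ = ∏ r : Fin (g.natDegree + f.natDegree), (if (r : ℕ) < g.natDegree then Sf else Sg) :=
          Equiv.prod_comp π (fun r : Fin (g.natDegree + f.natDegree) => if (r : ℕ) < g.natDegree then Sf else Sg)
      _ = Sf ^ g.natDegree * Sg ^ f.natDegree := by
          rw [Fin.prod_univ_add]
          congr 1
          · rw [Finset.prod_congr rfl fun i _ => if_pos (by simpa using i.isLt)]
            rw [Finset.prod_const, Finset.card_univ, Fintype.card_fin]
          · rw [Finset.prod_congr rfl fun i _ => if_neg (by simp)]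
            rw [Finset.prod_const, Finset.card_univ, Fintype.card_fin]
  calc ∑ π : Equiv.Perm (Fin (g.natDegree + f.natDegree)),
        Snorm (Equiv.Perm.sign π • ∏ i, sylvesterMatrix f g (π i) i)
      ≤ ∑ _π : Equiv.Perm (Fin (g.natDegree + f.natDegree)),
          Sf ^ g.natDegree * Sg ^ f.natDegree :=
        Finset.sum_le_sum fun π _ => hterm π
    _ = (Nat.factorial (g.natDegree + f.natDegree) : ℚ) * Sf ^ g.natDegree * Sg ^ f.natDegree := by
        rw [Finset.sum_const, Finset.card_univ, Fintype.card_perm, Fintype.card_fin,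
          nsmul_eq_mul, mul_assoc]

lemma resultant_degreeOf_le (f g : Polynomial (MvPolynomial ℕ ℚ)) (Df Dg : ℕ)
    (hf : ∀ e v, MvPolynomial.degreeOf v (f.coeff e) ≤ Df)
    (hg : ∀ e v, MvPolynomial.degreeOf v (g.coeff e) ≤ Dg) (v : ℕ) :
    MvPolynomial.degreeOf v (_root_.resultant f g) ≤ g.natDegree * Df + f.natDegree * Dg := by
  classical
  have hent : ∀ r c : Fin (g.natDegree + f.natDegree),
      MvPolynomial.degreeOf v (sylvesterMatrix f g r c) ≤
        if (r : ℕ) < g.natDegree then Df else Dg := by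
    intro r c
    simp only [sylvesterMatrix]
    split_ifs with h1 h2 h3
    · exact hf _ _
    · rw [MvPolynomial.degreeOf_zero]; exact Nat.zero_le _
    · exact hg _ _
    · rw [MvPolynomial.degreeOf_zero]; exact Nat.zero_le _
  rw [_root_.resultant, Matrix.det_apply]
  refine degreeOf_sum_le_of v _ _ _ fun π _ => ?_
  rw [degreeOf_units_smul]
  refine (degreeOf_prod_le v _ _).trans ?_
  calc ∑ i, MvPolynomial.degreeOf v (sylvesterMatrix f g (π i) i)
      ≤ ∑ i : Fin (g.natDegree + f.natDegree),
          (if ((π i : Fin _) : ℕ) < g.natDegree then Df else Dg) :=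
        Finset.sum_le_sum fun i _ => hent _ _
    _ = ∑ r : Fin (g.natDegree + f.natDegree), (if (r : ℕ) < g.natDegree then Df else Dg) :=
        Equiv.sum_comp π (fun r : Fin (g.natDegree + f.natDegree) => if (r : ℕ) < g.natDegree then Df else Dg)
    _ = g.natDegree * Df + f.natDegree * Dg := by
        rw [Fin.sum_univ_add]
        congr 1
        · rw [Finset.sum_congr rfl fun i _ => if_pos (by simpa using i.isLt)]
          rw [Finset.sum_const, Finset.card_univ, Fintype.card_fin, smul_eq_mul]
        · rw [Finset.sum_congr rfl fun i _ => if_neg (by simp)]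
          rw [Finset.sum_const, Finset.card_univ, Fintype.card_fin, smul_eq_mul]

/-- The summation polynomials `σₙ` of `E : Y² = X³ + aX + b`, defined by `σ₂ = X₁ − X₂`, the
explicit formula for `σ₃`, and recursively via resultants, satisfy `h(σₙ) = exp(O(n))`. -/
theorem stmt_9 (a b : ℚ) (hΔ : 4 * a ^ 3 + 27 * b ^ 2 ≠ 0)
    (σ : ℕ → MvPolynomial ℕ ℚ)
    (h2 : σ 2 = MvPolynomial.X 0 - MvPolynomial.X 1)
    (h3 : σ 3 = (MvPolynomial.X 0 - MvPolynomial.X 1) ^ 2 * (MvPolynomial.X 2) ^ 2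
      - 2 * ((MvPolynomial.X 0 + MvPolynomial.X 1) *
          (MvPolynomial.X 0 * MvPolynomial.X 1 + MvPolynomial.C a) +
          2 * MvPolynomial.C b) * MvPolynomial.X 2
      + (MvPolynomial.X 0 * MvPolynomial.X 1 - MvPolynomial.C a) ^ 2
      - 4 * MvPolynomial.C b * (MvPolynomial.X 0 + MvPolynomial.X 1))
    (hrec : ∀ n : ℕ, 4 ≤ n → ∃ k : ℕ, 1 ≤ k ∧ k ≤ n - 3 ∧
      σ n = _root_.resultant (substLast (n - k) 0 (σ (n - k)))
        (substLast (k + 2) (n - k - 1) (σ (k + 2)))) :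
    ∃ c : ℝ, ∀ n : ℕ, 2 ≤ n → hMv (σ n) ≤ Real.exp (c * (n : ℝ)) := by
  classical
  set K : ℚ := max 2 (Snorm (σ 3)) with hKdef
  have hK2 : (2 : ℚ) ≤ K := le_max_left _ _
  have hK1 : (1 : ℚ) ≤ K := by linarith
  have hK0 : (0 : ℚ) ≤ K := by linarith
  have hadd' : ∀ (v : ℕ) (P Q : MvPolynomial ℕ ℚ), MvPolynomial.degreeOf v (P + Q) ≤
      MvPolynomial.degreeOf v P + MvPolynomial.degreeOf v Q :=
    fun v P Q => (MvPolynomial.degreeOf_add_le v P Q).trans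
      (max_le (Nat.le_add_right _ _) (Nat.le_add_left _ _))
  have hsub' : ∀ (v : ℕ) (P Q : MvPolynomial ℕ ℚ), MvPolynomial.degreeOf v (P - Q) ≤
      MvPolynomial.degreeOf v P + MvPolynomial.degreeOf v Q :=
    fun v P Q => (MvPolynomial.degreeOf_sub_le v P Q).trans
      (max_le (Nat.le_add_right _ _) (Nat.le_add_left _ _))
  have hd2 : ∀ v, MvPolynomial.degreeOf v (σ 2) ≤ 1 := by
    intro v
    rw [h2]
    refine le_trans (hsub' v _ _) ?_
    rw [MvPolynomial.degreeOf_X, MvPolynomial.degreeOf_X]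
    split_ifs <;> omega
  have hd3 : ∀ v, MvPolynomial.degreeOf v (σ 3) ≤ 2 := by
    intro v
    rw [h3]
    set x0 := (MvPolynomial.X 0 : MvPolynomial ℕ ℚ) with hx0
    set x1 := (MvPolynomial.X 1 : MvPolynomial ℕ ℚ) with hx1
    set x2 := (MvPolynomial.X 2 : MvPolynomial ℕ ℚ) with hx2
    have hs : MvPolynomial.degreeOf v x0 + MvPolynomial.degreeOf v x1 +
        MvPolynomial.degreeOf v x2 ≤ 1 := by
      rw [hx0, hx1, hx2, MvPolynomial.degreeOf_X, MvPolynomial.degreeOf_X,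
        MvPolynomial.degreeOf_X]
      split_ifs <;> omega
    have hca : MvPolynomial.degreeOf v (MvPolynomial.C a) = 0 := MvPolynomial.degreeOf_C _ _
    have hcb : MvPolynomial.degreeOf v (MvPolynomial.C b) = 0 := MvPolynomial.degreeOf_C _ _
    have h2' : MvPolynomial.degreeOf v (2 : MvPolynomial ℕ ℚ) = 0 := by
      rw [← map_ofNat (MvPolynomial.C : ℚ →+* MvPolynomial ℕ ℚ) 2, MvPolynomial.degreeOf_C]
    have h4' : MvPolynomial.degreeOf v (4 : MvPolynomial ℕ ℚ) = 0 := by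
      rw [← map_ofNat (MvPolynomial.C : ℚ →+* MvPolynomial ℕ ℚ) 4, MvPolynomial.degreeOf_C]
    have hT1 : MvPolynomial.degreeOf v ((x0 - x1) ^ 2 * x2 ^ 2) ≤ 2 := by
      have p1 := MvPolynomial.degreeOf_mul_le v ((x0 - x1) ^ 2) (x2 ^ 2)
      have p2 := MvPolynomial.degreeOf_pow_le v (x0 - x1) 2
      have p3 := MvPolynomial.degreeOf_pow_le v x2 2
      have p4 := hsub' v x0 x1
      omega
    have hT2 : MvPolynomial.degreeOf v
        (2 * ((x0 + x1) * (x0 * x1 + MvPolynomial.C a) + 2 * MvPolynomial.C b) * x2) ≤ 2 := by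
      have p0 := MvPolynomial.degreeOf_mul_le v
        (2 * ((x0 + x1) * (x0 * x1 + MvPolynomial.C a) + 2 * MvPolynomial.C b)) x2
      have p1 := MvPolynomial.degreeOf_mul_le v (2 : MvPolynomial ℕ ℚ)
        ((x0 + x1) * (x0 * x1 + MvPolynomial.C a) + 2 * MvPolynomial.C b)
      have p2 := hadd' v ((x0 + x1) * (x0 * x1 + MvPolynomial.C a)) (2 * MvPolynomial.C b)
      have p3 := MvPolynomial.degreeOf_mul_le v (x0 + x1) (x0 * x1 + MvPolynomial.C a)
      have p4 := hadd' v (x0 * x1) (MvPolynomial.C a)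
      have p5 := MvPolynomial.degreeOf_mul_le v x0 x1
      have p6 := MvPolynomial.degreeOf_mul_le v (2 : MvPolynomial ℕ ℚ) (MvPolynomial.C b)
      have p7 := hadd' v x0 x1
      omega
    have hT3 : MvPolynomial.degreeOf v ((x0 * x1 - MvPolynomial.C a) ^ 2) ≤ 2 := by
      have p1 := MvPolynomial.degreeOf_pow_le v (x0 * x1 - MvPolynomial.C a) 2
      have p2 := hsub' v (x0 * x1) (MvPolynomial.C a)
      have p3 := MvPolynomial.degreeOf_mul_le v x0 x1
      omega
    have hT4 : MvPolynomial.degreeOf v (4 * MvPolynomial.C b * (x0 + x1)) ≤ 2 := by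
      have p1 := MvPolynomial.degreeOf_mul_le v (4 * MvPolynomial.C b) (x0 + x1)
      have p2 := MvPolynomial.degreeOf_mul_le v (4 : MvPolynomial ℕ ℚ) (MvPolynomial.C b)
      have p3 := hadd' v x0 x1
      omega
    exact le_trans (MvPolynomial.degreeOf_sub_le _ _ _)
      (max_le (le_trans (MvPolynomial.degreeOf_add_le _ _ _)
        (max_le (le_trans (MvPolynomial.degreeOf_sub_le _ _ _) (max_le hT1 hT2)) hT3)) hT4)
  have main : ∀ n, 2 ≤ n →
      (∀ v, MvPolynomial.degreeOf v (σ n) ≤ 2 ^ (2 * n - 5)) ∧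
        Snorm (σ n) ≤ K ^ (8 ^ n) := by
    intro n
    induction n using Nat.strong_induction_on with
    | _ n ih =>
      intro hn2
      by_cases hn4 : n < 4
      · interval_cases n
        · refine ⟨fun v => le_trans (hd2 v) (by norm_num), ?_⟩
          rw [h2]
          have hs2 : Snorm (MvPolynomial.X 0 - MvPolynomial.X 1 : MvPolynomial ℕ ℚ) ≤ 2 := by
            rw [sub_eq_add_neg]
            refine (Snorm_add_le _ _).trans ?_
            rw [Snorm_neg, Snorm_X, Snorm_X]
            norm_num
          exact le_trans hs2 (le_trans hK2 (le_self_pow₀ hK1 (by norm_num)))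
        · refine ⟨fun v => le_trans (hd3 v) (by norm_num), ?_⟩
          exact le_trans (le_max_right _ _) (le_self_pow₀ hK1 (by norm_num))
      · push_neg at hn4
        obtain ⟨k, hk1, hk3, hσ⟩ := hrec n hn4
        have hkn : k + 3 ≤ n := by omega
        set f := n - k with hfdef
        set g := k + 2 with hgdef
        have hf3 : 3 ≤ f := by omega
        have hfn : f < n := by omega
        have hg3 : 3 ≤ g := by omega
        have hgn : g < n := by omega
        have hfg : f + g = n + 2 := by omega
        obtain ⟨ihfD, ihfS⟩ := ih f hfn (by omega)
        obtain ⟨ihgD, ihgS⟩ := ih g hgn (by omega)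
        set F := substLast f 0 (σ f) with hF
        set G := substLast g (f - 1) (σ g) with hG
        have hσ' : σ n = _root_.resultant F G := hσ
        have hdF : F.natDegree ≤ 2 ^ (2 * f - 5) :=
          (substLast_natDegree_le _ _ _).trans (ihfD _)
        have hdG : G.natDegree ≤ 2 ^ (2 * g - 5) :=
          (substLast_natDegree_le _ _ _).trans (ihgD _)
        have hSF : ∀ e, Snorm (F.coeff e) ≤ K ^ 8 ^ f :=
          fun e => (substLast_coeff_Snorm_le _ _ _ _).trans ihfS
        have hSG : ∀ e, Snorm (G.coeff e) ≤ K ^ 8 ^ g :=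
          fun e => (substLast_coeff_Snorm_le _ _ _ _).trans ihgS
        have hDF : ∀ e v, MvPolynomial.degreeOf v (F.coeff e) ≤ 2 ^ (2 * f - 5) :=
          fun e v => substLast_coeff_degreeOf_le _ _ _ _ ihfD e v
        have hDG : ∀ e v, MvPolynomial.degreeOf v (G.coeff e) ≤ 2 ^ (2 * g - 5) :=
          fun e v => substLast_coeff_degreeOf_le _ _ _ _ ihgD e v
        constructor
        · intro v
          rw [hσ']
          refine (resultant_degreeOf_le F G _ _ hDF hDG v).trans ?_
          calc G.natDegree * 2 ^ (2 * f - 5) + F.natDegree * 2 ^ (2 * g - 5)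
              ≤ 2 ^ (2 * g - 5) * 2 ^ (2 * f - 5) + 2 ^ (2 * f - 5) * 2 ^ (2 * g - 5) :=
                add_le_add (Nat.mul_le_mul_right _ hdG) (Nat.mul_le_mul_right _ hdF)
            _ = 2 ^ ((2 * g - 5) + (2 * f - 5)) + 2 ^ ((2 * f - 5) + (2 * g - 5)) := by
                rw [pow_add, pow_add]
            _ = 2 ^ (2 * n - 6) + 2 ^ (2 * n - 6) := by
                have e1 : (2 * g - 5) + (2 * f - 5) = 2 * n - 6 := by omega
                have e2 : (2 * f - 5) + (2 * g - 5) = 2 * n - 6 := by omega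
                rw [e1, e2]
            _ = 2 ^ (2 * n - 5) := by
                rw [← two_mul, ← pow_succ']
                congr 1
                omega
        · rw [hσ']
          refine (resultant_Snorm_le F G (K ^ 8 ^ f) (K ^ 8 ^ g)
            (by positivity) (by positivity) hSF hSG).trans ?_
          have hd : G.natDegree + F.natDegree ≤ 2 ^ (2 * n - 6) := by
            have h1 : (2:ℕ) ^ (2 * g - 5) ≤ 2 ^ (2 * n - 7) :=
              Nat.pow_le_pow_right (by norm_num) (by omega)
            have h2 : (2:ℕ) ^ (2 * f - 5) ≤ 2 ^ (2 * n - 7) :=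
              Nat.pow_le_pow_right (by norm_num) (by omega)
            have h3 : (2:ℕ) ^ (2 * n - 7) + 2 ^ (2 * n - 7) = 2 ^ (2 * n - 6) := by
              rw [← two_mul, ← pow_succ']
              congr 1
              omega
            omega
          have hfact : ((Nat.factorial (G.natDegree + F.natDegree) : ℕ) : ℚ) ≤
              K ^ ((2 * n - 6) * 2 ^ (2 * n - 6)) := by
            have h1 : Nat.factorial (G.natDegree + F.natDegree) ≤
                2 ^ ((2 * n - 6) * 2 ^ (2 * n - 6)) := by
              calc Nat.factorial (G.natDegree + F.natDegree)
                  ≤ (G.natDegree + F.natDegree) ^ (G.natDegree + F.natDegree) :=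
                    Nat.factorial_le_pow _
                _ ≤ (2 ^ (2 * n - 6)) ^ (G.natDegree + F.natDegree) :=
                    Nat.pow_le_pow_left hd _
                _ ≤ (2 ^ (2 * n - 6)) ^ (2 ^ (2 * n - 6)) :=
                    Nat.pow_le_pow_right (by positivity) hd
                _ = 2 ^ ((2 * n - 6) * 2 ^ (2 * n - 6)) := by rw [← pow_mul]
            calc ((Nat.factorial (G.natDegree + F.natDegree) : ℕ) : ℚ)
                ≤ (((2:ℕ) ^ ((2 * n - 6) * 2 ^ (2 * n - 6)) : ℕ) : ℚ) := by exact_mod_cast h1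
              _ = (2:ℚ) ^ ((2 * n - 6) * 2 ^ (2 * n - 6)) := by push_cast; ring
              _ ≤ K ^ ((2 * n - 6) * 2 ^ (2 * n - 6)) :=
                  pow_le_pow_left₀ (by norm_num) hK2 _
          have hA : ((K ^ 8 ^ f) ^ G.natDegree : ℚ) ≤ K ^ 2 ^ (3 * n - 2) := by
            rw [← pow_mul]
            refine pow_le_pow_right₀ hK1 ?_
            calc 8 ^ f * G.natDegree ≤ 8 ^ f * 2 ^ (2 * g - 5) :=
                  Nat.mul_le_mul_left _ hdG
              _ = 2 ^ (3 * f + (2 * g - 5)) := by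
                  rw [show (8:ℕ) = 2 ^ 3 by norm_num, ← pow_mul, ← pow_add]
              _ ≤ 2 ^ (3 * n - 2) := Nat.pow_le_pow_right (by norm_num) (by omega)
          have hB : ((K ^ 8 ^ g) ^ F.natDegree : ℚ) ≤ K ^ 2 ^ (3 * n - 2) := by
            rw [← pow_mul]
            refine pow_le_pow_right₀ hK1 ?_
            calc 8 ^ g * F.natDegree ≤ 8 ^ g * 2 ^ (2 * f - 5) :=
                  Nat.mul_le_mul_left _ hdF
              _ = 2 ^ (3 * g + (2 * f - 5)) := by
                  rw [show (8:ℕ) = 2 ^ 3 by norm_num, ← pow_mul, ← pow_add]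
              _ ≤ 2 ^ (3 * n - 2) := Nat.pow_le_pow_right (by norm_num) (by omega)
          have hexp : (2 * n - 6) * 2 ^ (2 * n - 6) + 2 ^ (3 * n - 2) + 2 ^ (3 * n - 2)
              ≤ 8 ^ n := by
            have hE : (2 * n - 6) * 2 ^ (2 * n - 6) ≤ 2 ^ (3 * n - 5) := by
              have h2n : (2:ℕ) ^ (n + 1) = 2 * 2 ^ n := by rw [pow_succ']
              have hlt : n < 2 ^ n := Nat.lt_two_pow_self
              calc (2 * n - 6) * 2 ^ (2 * n - 6) ≤ 2 ^ (n + 1) * 2 ^ (2 * n - 6) :=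
                    Nat.mul_le_mul_right _ (by omega)
                _ = 2 ^ ((n + 1) + (2 * n - 6)) := (pow_add 2 _ _).symm
                _ ≤ 2 ^ (3 * n - 5) := Nat.pow_le_pow_right (by norm_num) (by omega)
            have e1 : (2:ℕ) ^ (3 * n - 5) ≤ 2 ^ (3 * n - 1) :=
              Nat.pow_le_pow_right (by norm_num) (by omega)
            have e2 : (2:ℕ) ^ (3 * n - 2) + 2 ^ (3 * n - 2) = 2 ^ (3 * n - 1) := by
              rw [← two_mul, ← pow_succ']
              congr 1
              omega
            have e3 : (2:ℕ) ^ (3 * n - 1) + 2 ^ (3 * n - 1) = 2 ^ (3 * n) := by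
              rw [← two_mul, ← pow_succ']
              congr 1
              omega
            have e4 : (8:ℕ) ^ n = 2 ^ (3 * n) := by
              rw [show (8:ℕ) = 2 ^ 3 by norm_num, ← pow_mul]
            omega
          calc ((Nat.factorial (G.natDegree + F.natDegree) : ℕ) : ℚ) *
                (K ^ 8 ^ f) ^ G.natDegree * (K ^ 8 ^ g) ^ F.natDegree
              ≤ K ^ ((2 * n - 6) * 2 ^ (2 * n - 6)) * K ^ 2 ^ (3 * n - 2) *
                  K ^ 2 ^ (3 * n - 2) := by
                refine mul_le_mul (mul_le_mul hfact hA ?_ ?_) hB ?_ ?_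
                · positivity
                · positivity
                · positivity
                · positivity
            _ = K ^ ((2 * n - 6) * 2 ^ (2 * n - 6) + 2 ^ (3 * n - 2) + 2 ^ (3 * n - 2)) := by
                rw [← pow_add, ← pow_add]
            _ ≤ K ^ 8 ^ n := pow_le_pow_right₀ hK1 hexp
  set L : ℝ := max 1 (Real.log (K : ℝ)) with hLdef
  refine ⟨Real.log 8 + Real.log L, ?_⟩
  intro n hn2
  obtain ⟨_, hS⟩ := main n hn2
  have hbound : ∀ m : (ℕ →₀ ℕ), |(((σ n).coeff m : ℚ) : ℝ)| ≤ ((K : ℝ) ^ (8 ^ n : ℕ)) := by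
    intro m
    have h1 : |(σ n).coeff m| ≤ K ^ (8 ^ n : ℕ) :=
      le_trans (abs_coeff_le_Snorm _ _) hS
    calc |(((σ n).coeff m : ℚ) : ℝ)| = ((|(σ n).coeff m| : ℚ) : ℝ) := by push_cast; rfl
      _ ≤ ((K ^ (8 ^ n : ℕ) : ℚ) : ℝ) := by exact_mod_cast h1
      _ = (K : ℝ) ^ (8 ^ n : ℕ) := by push_cast; ring
  have hK1R : (1 : ℝ) ≤ (K : ℝ) ^ (8 ^ n : ℕ) := by
    refine one_le_pow₀ ?_
    exact_mod_cast hK1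
  have hbdd : BddAbove (Set.range fun m : (ℕ →₀ ℕ) => |(((σ n).coeff m : ℚ) : ℝ)|) := by
    refine ⟨(K : ℝ) ^ (8 ^ n : ℕ), ?_⟩
    rintro x ⟨m, rfl⟩
    exact hbound m
  have hsup_le : (⨆ m : (ℕ →₀ ℕ), |(((σ n).coeff m : ℚ) : ℝ)|) ≤ (K : ℝ) ^ (8 ^ n : ℕ) :=
    ciSup_le hbound
  have hsup_nonneg : (0 : ℝ) ≤ ⨆ m : (ℕ →₀ ℕ), |(((σ n).coeff m : ℚ) : ℝ)| :=
    le_trans (abs_nonneg _) (le_ciSup hbdd 0)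
  have hMv_le : hMv (σ n) ≤ Real.log ((K : ℝ) ^ (8 ^ n : ℕ)) := by
    unfold hMv
    refine max_le (Real.log_nonneg hK1R) ?_
    rcases eq_or_lt_of_le hsup_nonneg with h0 | hpos
    · rw [← h0, Real.log_zero]
      exact Real.log_nonneg hK1R
    · exact Real.log_le_log hpos hsup_le
  have hKL : Real.log (K : ℝ) ≤ L := le_max_right _ _
  have hL1 : (1 : ℝ) ≤ L := le_max_left _ _
  have hLpos : (0 : ℝ) < L := by linarith
  calc hMv (σ n) ≤ ((8 ^ n : ℕ) : ℝ) * Real.log (K : ℝ) := by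
        rw [← Real.log_pow]
        exact hMv_le
    _ ≤ (8 : ℝ) ^ n * L ^ n := by
        have h8 : ((8 ^ n : ℕ) : ℝ) = (8 : ℝ) ^ n := by push_cast; ring
        rw [h8]
        refine mul_le_mul_of_nonneg_left ?_ (by positivity)
        exact le_trans hKL (le_self_pow₀ hL1 (by omega))
    _ = Real.exp ((Real.log 8 + Real.log L) * (n : ℝ)) := by
        rw [add_mul, Real.exp_add, mul_comm (Real.log 8) (n : ℝ),
          mul_comm (Real.log L) (n : ℝ), Real.exp_nat_mul, Real.exp_nat_mul,
          Real.exp_log (by norm_num : (0:ℝ) < 8), Real.exp_log hLpos]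
end
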